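/- arXiv:2212.00870 — 4 statements merged into one kernel-verified Lean document; each statement's English description precedes it below -/
import Mathlib

section
/- Let n ≥ 1, let X_1,…,X_n be {0,1}-valued random variables, let p_1,…,p_n ∈ [0,1] and let a_1,…,a_n be positive reals. Suppose that for every i ∈ [n], almost surely P[X_i = 1 | X_1,…,X_{i−1}] ≤ p_i. Let Y_1,…,Y_n be independent random variables with Y_i distributed as Bernoulli(p_i). Then for every t ≥ 0, P[Σ_{i∈[n]} a_i·Y_i ≥ t] ≥ P[Σ_{i∈[n]} a_i·X_i ≥ t]. -/
open MeasureTheory Fin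
noncomputable section

private lemma measurable_decide_eq_one : Measurable (fun x : ℝ => decide (x = 1)) := by
  apply measurable_to_countable'
  intro b
  cases b
  · convert (measurableSet_singleton (1:ℝ)).compl using 1
    ext x; simp
  · convert measurableSet_singleton (1:ℝ) using 1
    ext x; simp

private abbrev bern (q : ℝ) (h : q ≤ 1) : Measure Bool :=
  (PMF.bernoulli (Real.toNNReal q) (Real.toNNReal_le_one.mpr h)).toMeasure

private lemma bern_true {q : ℝ} (h0 : 0 ≤ q) (h1 : q ≤ 1) :
    ((bern q h1) {true}).toReal = q := by
  rw [PMF.toMeasure_apply_singleton _ _ (measurableSet_singleton _)]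
  simp [PMF.bernoulli_apply, h0]

private lemma bern_false {q : ℝ} (h0 : 0 ≤ q) (h1 : q ≤ 1) :
    ((bern q h1) {false}).toReal = 1 - q := by
  rw [PMF.toMeasure_apply_singleton _ _ (measurableSet_singleton _)]
  simp only [PMF.bernoulli_apply, Bool.cond_false]
  rw [ENNReal.coe_toReal, NNReal.coe_sub (Real.toNNReal_le_one.mpr h1)]
  simp [h0]

private lemma integral_fin {α : Type*} [Fintype α] [MeasurableSpace α]
    [MeasurableSingletonClass α] (ν : Measure α) [IsFiniteMeasure ν] (f : α → ℝ) :
    ∫ x, f x ∂ν = ∑ x, (ν {x}).toReal * f x := by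
  rw [integral_fintype (.of_finite)]
  rfl

private lemma pi_singleton {n : ℕ} (ν : Fin n → Measure Bool) [∀ i, SigmaFinite (ν i)]
    (b : Fin n → Bool) : (Measure.pi ν) {b} = ∏ i, ν i {b i} := by
  rw [← Set.univ_pi_singleton, Measure.pi_pi]

private lemma int_bdd {Ω : Type} [MeasurableSpace Ω] {μ : Measure Ω} [IsFiniteMeasure μ]
    {f : Ω → ℝ} (hm : AEStronglyMeasurable f μ) {C : ℝ} (h : ∀ ω, ‖f ω‖ ≤ C) :
    Integrable f μ :=
  Integrable.mono' (integrable_const C) hm (Filter.Eventually.of_forall h)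

private def sAlg {Ω : Type} {n : ℕ} (X : Fin n → Ω → ℝ) (i : Fin n) : MeasurableSpace Ω :=
  ⨆ (j : Fin n) (_ : j < i), MeasurableSpace.comap (X j) (inferInstance : MeasurableSpace ℝ)

private lemma meas_pi' {Ω : Type} (m : MeasurableSpace Ω) {n : ℕ} (f : Ω → Fin n → Bool)
    (hf : ∀ k, Measurable[m] fun ω => f ω k) : Measurable[m] f := by
  letI := m; exact measurable_pi_lambda f hf

private lemma key {Ω : Type} [mΩ : MeasurableSpace Ω] (μ : Measure Ω) [IsProbabilityMeasure μ] :
    ∀ (n : ℕ) (X : Fin n → Ω → ℝ) (p : Fin n → ℝ),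
      (∀ i, Measurable (X i)) → (∀ i ω, X i ω = 0 ∨ X i ω = 1) →
      (∀ i, 0 ≤ p i) → ∀ hp1 : ∀ i, p i ≤ 1,
      (∀ i : Fin n, ∀ᵐ ω ∂μ,
        (MeasureTheory.condExp
            (⨆ (j : Fin n) (_ : j < i),
              MeasurableSpace.comap (X j) (inferInstance : MeasurableSpace ℝ)) μ (X i)) ω ≤ p i) →
      ∀ g : (Fin n → Bool) → ℝ, (∀ b, 0 ≤ g b) → (∀ b, g b ≤ 1) → Monotone g →
      ∫ ω, g (fun i => decide (X i ω = 1)) ∂μ ≤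
        ∫ b, g b ∂(MeasureTheory.Measure.pi fun i : Fin n => bern (p i) (hp1 i)) := by
  intro n
  induction n with
  | zero =>
    intro X p hX hX01 hp0 hp1 hcond g hg0 hg1 hmono
    have h1 : (fun ω => g (fun i => decide (X i ω = 1))) = fun _ => g default :=
      funext fun ω => congrArg g (Subsingleton.elim _ _)
    have h2 : (fun b : Fin 0 → Bool => g b) = fun _ => g default :=
      funext fun b => congrArg g (Subsingleton.elim _ _)
    rw [h1, h2, integral_const, integral_const]
    simp
  | succ n IH =>
    intro X p hX hX01 hp0 hp1 hcond g hg0 hg1 hmono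
    have hF : (sAlg X (last n)) ≤ mΩ := iSup₂_le fun j _ => (hX j).comap_le
    haveI : SigmaFinite (μ.trim hF) := inferInstance
    set bitsF : Ω → (Fin n → Bool) := fun ω k => decide (X (castSucc k) ω = 1) with hbFdef
    have hcondL : ∀ᵐ ω ∂μ, (μ[X (last n)|sAlg X (last n)]) ω ≤ p (last n) := hcond (last n)
    have hbitsF : Measurable[(sAlg X (last n))] bitsF := by
      refine meas_pi' _ _ fun k => ?_
      have h1 : Measurable[MeasurableSpace.comap (X (castSucc k)) inferInstance]
          (fun ω => decide (X (castSucc k) ω = 1)) :=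
        measurable_decide_eq_one.comp (Measurable.of_comap_le le_rfl)
      exact h1.mono (le_iSup₂ (f := fun (j : Fin (n+1)) (_ : j < last n) =>
        MeasurableSpace.comap (X j) (inferInstance : MeasurableSpace ℝ))
        (castSucc k) (castSucc_lt_last k)) le_rfl
    set g₀ : (Fin n → Bool) → ℝ := fun b => g (Fin.snoc b false) with hg₀def
    set g₁ : (Fin n → Bool) → ℝ := fun b => g (Fin.snoc b true) with hg₁def
    set A : Ω → ℝ := fun ω => g₀ (bitsF ω) with hAdef
    set B : Ω → ℝ := fun ω => g₁ (bitsF ω) - g₀ (bitsF ω) with hBdef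
    set f : Ω → ℝ := fun ω => g (fun i => decide (X i ω = 1)) with hfdef
    have hsnoc_le : ∀ b : Fin n → Bool, Fin.snoc b false ≤ (Fin.snoc b true : Fin (n+1) → Bool) := by
      intro b i
      refine Fin.lastCases ?_ ?_ i
      · simp
      · intro k; simp
    have hBnn : ∀ ω, 0 ≤ B ω := fun ω => sub_nonneg.mpr (hmono (hsnoc_le _))
    have hBbd : ∀ ω, ‖B ω‖ ≤ 1 := by
      intro ω
      rw [Real.norm_eq_abs, abs_le]
      constructor
      · linarith [hBnn ω]
      · have h1 := hg1 (Fin.snoc (bitsF ω) true)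
        have h2 := hg0 (Fin.snoc (bitsF ω) false)
        simp only [hBdef, hg₀def, hg₁def]
        linarith
    have hAbd : ∀ ω, ‖A ω‖ ≤ 1 := by
      intro ω
      rw [Real.norm_eq_abs, abs_le]
      have h1 := hg1 (Fin.snoc (bitsF ω) false)
      have h2 := hg0 (Fin.snoc (bitsF ω) false)
      constructor <;> simp only [hAdef, hg₀def] <;> linarith
    have hfeq : f = fun ω => A ω + B ω * X (last n) ω := by
      funext ω
      rcases hX01 (last n) ω with h | h
      · have hb : (fun i => decide (X i ω = 1)) = Fin.snoc (bitsF ω) false := by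
          funext i
          refine Fin.lastCases ?_ ?_ i
          · simp [h]
          · intro k; simp [hbFdef]
        simp [hfdef, hb, h, hAdef, hg₀def]
      · have hb : (fun i => decide (X i ω = 1)) = Fin.snoc (bitsF ω) true := by
          funext i
          refine Fin.lastCases ?_ ?_ i
          · simp [h]
          · intro k; simp [hbFdef]
        simp only [hfdef, hb, h, hAdef, hBdef, hg₀def, hg₁def, mul_one]
        ring
    have mg : ∀ g' : (Fin n → Bool) → ℝ, Measurable g' := fun g' => measurable_of_countable g'
    have hA_meas : Measurable[(sAlg X (last n))] A := (mg g₀).comp hbitsF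
    have hB_meas : Measurable[(sAlg X (last n))] B := ((mg g₁).comp hbitsF).sub ((mg g₀).comp hbitsF)
    have hA_int : Integrable A μ := int_bdd (μ := μ) (hA_meas.mono hF le_rfl).aestronglyMeasurable hAbd
    have hXlbd : ∀ ω, ‖X (last n) ω‖ ≤ 1 := by
      intro ω; rcases hX01 (last n) ω with h | h <;> simp [h]
    have hXl_int : Integrable (X (last n)) μ := int_bdd (μ := μ) (hX _).aestronglyMeasurable hXlbd
    have hBX_int : Integrable (B * X (last n)) μ := by
      refine int_bdd (μ := μ) (((hB_meas.mono hF le_rfl).mul (hX _)).aestronglyMeasurable) (C := 1) ?_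
      intro ω
      have := mul_le_mul (hBbd ω) (hXlbd ω) (norm_nonneg _) zero_le_one
      calc ‖(B * X (last n)) ω‖ = ‖B ω‖ * ‖X (last n) ω‖ := norm_mul _ _
        _ ≤ 1 * 1 := this
        _ = 1 := one_mul 1
    have hf_int : Integrable f μ := by
      rw [hfeq]
      exact hA_int.add hBX_int
    have hce : μ[f|(sAlg X (last n))] =ᵐ[μ] fun ω => A ω + B ω * (μ[X (last n)|(sAlg X (last n))]) ω := by
      have h1 : f = A + B * X (last n) := hfeq
      rw [h1]
      calc μ[A + B * X (last n)|(sAlg X (last n))]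
          =ᵐ[μ] μ[A|(sAlg X (last n))] + μ[B * X (last n)|(sAlg X (last n))] := condExp_add hA_int hBX_int _
        _ =ᵐ[μ] A + B * μ[X (last n)|(sAlg X (last n))] := by
            refine Filter.EventuallyEq.add ?_ ?_
            · exact Filter.EventuallyEq.of_eq
                (condExp_of_stronglyMeasurable hF hA_meas.stronglyMeasurable hA_int)
            · exact condExp_stronglyMeasurable_mul_of_bound hF hB_meas.stronglyMeasurable
                hXl_int 1 (Filter.Eventually.of_forall hBbd)
        _ = fun ω => A ω + B ω * (μ[X (last n)|(sAlg X (last n))]) ω := rfl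
    set hfun : (Fin n → Bool) → ℝ := fun b => g₀ b + (g₁ b - g₀ b) * p (last n) with hhdef
    have step_bound : ∀ᵐ ω ∂μ, (μ[f|(sAlg X (last n))]) ω ≤ hfun (bitsF ω) := by
      filter_upwards [hce, hcondL] with ω h1 h2
      rw [h1]
      have h3 : B ω * (μ[X (last n)|(sAlg X (last n))]) ω ≤ B ω * p (last n) :=
        mul_le_mul_of_nonneg_left h2 (hBnn ω)
      simp only [hhdef, hAdef, hBdef] at *
      linarith
    have hhbd : ∀ b, ‖hfun (b : Fin n → Bool)‖ ≤ 1 := by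
      intro b
      have h0 := hg0 (Fin.snoc b false)
      have h1 := hg1 (Fin.snoc b false)
      have h2 := hg0 (Fin.snoc b true)
      have h3 := hg1 (Fin.snoc b true)
      have hm := hmono (hsnoc_le b)
      have hq0 := hp0 (last n)
      have hq1 := hp1 (last n)
      rw [Real.norm_eq_abs, abs_le]
      simp only [hhdef, hg₀def, hg₁def]
      constructor <;> nlinarith
    have step2 : ∫ ω, (μ[f|(sAlg X (last n))]) ω ∂μ ≤ ∫ ω, hfun (bitsF ω) ∂μ := by
      refine integral_mono_ae integrable_condExp ?_ step_bound
      exact int_bdd (μ := μ) (((mg hfun).comp (hbitsF.mono hF le_rfl)).aestronglyMeasurable)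
        (fun ω => hhbd (bitsF ω))
    have hfun0 : ∀ b, 0 ≤ hfun b := by
      intro b
      have h0 := hg0 (Fin.snoc b false)
      have hm := hmono (hsnoc_le b)
      have hq0 := hp0 (last n); have hq1 := hp1 (last n)
      simp only [hhdef, hg₀def, hg₁def]
      nlinarith
    have hfun1 : ∀ b, hfun b ≤ 1 := by
      intro b
      have h1 := hg1 (Fin.snoc b false)
      have h3 := hg1 (Fin.snoc b true)
      have hm := hmono (hsnoc_le b)
      have hq0 := hp0 (last n); have hq1 := hp1 (last n)
      simp only [hhdef, hg₀def, hg₁def]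
      nlinarith
    have hsnoc_mono : ∀ (x : Bool) {b b' : Fin n → Bool}, b ≤ b' →
        (Fin.snoc b x : Fin (n+1) → Bool) ≤ Fin.snoc b' x := by
      intro x b b' hb i
      refine Fin.lastCases ?_ ?_ i
      · simp
      · intro k; simpa using hb k
    have hfun_mono : Monotone hfun := by
      intro b b' hb
      have h0 := hmono (hsnoc_mono false hb)
      have h1 := hmono (hsnoc_mono true hb)
      have hq0 := hp0 (last n); have hq1 := hp1 (last n)
      simp only [hhdef, hg₀def, hg₁def]
      nlinarith
    have σeq : ∀ i : Fin n,
        (⨆ (j : Fin n) (_ : j < i),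
          MeasurableSpace.comap (X (castSucc j)) (inferInstance : MeasurableSpace ℝ)) =
        ⨆ (j : Fin (n+1)) (_ : j < castSucc i),
          MeasurableSpace.comap (X j) (inferInstance : MeasurableSpace ℝ) := by
      intro i
      apply le_antisymm
      · refine iSup₂_le fun j hj => ?_
        exact le_iSup₂ (f := fun (j : Fin (n+1)) (_ : j < castSucc i) =>
          MeasurableSpace.comap (X j) (inferInstance : MeasurableSpace ℝ))
          (castSucc j) (castSucc_lt_castSucc_iff.mpr hj)
      · refine iSup₂_le fun j hj => ?_
        have hjv : j.1 < i.1 := by simpa [Fin.lt_iff_val_lt_val] using hj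
        have hjn : j.1 < n := lt_trans hjv i.isLt
        have hcast : castSucc (j.castLT hjn) = j := Fin.castSucc_castLT j hjn
        have hlt : j.castLT hjn < i := by
          rw [Fin.lt_iff_val_lt_val]
          simpa using hjv
        calc MeasurableSpace.comap (X j) (inferInstance : MeasurableSpace ℝ)
            = MeasurableSpace.comap (X (castSucc (j.castLT hjn)))
                (inferInstance : MeasurableSpace ℝ) := by rw [hcast]
          _ ≤ _ := le_iSup₂ (f := fun (k : Fin n) (_ : k < i) =>
              MeasurableSpace.comap (X (castSucc k)) (inferInstance : MeasurableSpace ℝ))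
              (j.castLT hjn) hlt
    have hcond' : ∀ i : Fin n, ∀ᵐ ω ∂μ,
        (MeasureTheory.condExp
            (⨆ (j : Fin n) (_ : j < i),
              MeasurableSpace.comap ((fun k : Fin n => X (castSucc k)) j)
                (inferInstance : MeasurableSpace ℝ)) μ
            ((fun k : Fin n => X (castSucc k)) i)) ω ≤ (fun k : Fin n => p (castSucc k)) i := by
      intro i
      simp only
      rw [σeq i]
      exact hcond (castSucc i)
    have step3 : ∫ ω, hfun (bitsF ω) ∂μ ≤
        ∫ b, hfun b ∂(Measure.pi fun k : Fin n => bern (p (castSucc k)) (hp1 (castSucc k))) :=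
      IH (fun k => X (castSucc k)) (fun k => p (castSucc k))
        (fun k => hX _) (fun k ω => hX01 _ ω) (fun k => hp0 _) (fun k => hp1 _)
        hcond' hfun hfun0 hfun1 hfun_mono
    have hw' : ∀ b' : Fin n → Bool,
        ((Measure.pi fun k : Fin n => bern (p (castSucc k)) (hp1 (castSucc k))) {b'}).toReal
          = ∏ k : Fin n, ((bern (p (castSucc k)) (hp1 (castSucc k))) {b' k}).toReal := by
      intro b'
      rw [pi_singleton, ENNReal.toReal_prod]
    have step4 : ∫ b', hfun b' ∂(Measure.pi fun k : Fin n => bern (p (castSucc k)) (hp1 (castSucc k)))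
        = ∫ b, g b ∂(Measure.pi fun i : Fin (n+1) => bern (p i) (hp1 i)) := by
      rw [integral_fin, integral_fin]
      rw [← Fintype.sum_equiv (Fin.snocEquiv (fun _ : Fin (n+1) => Bool))
        (fun pr => ((Measure.pi fun i : Fin (n+1) => bern (p i) (hp1 i))
            {(Fin.snocEquiv (fun _ : Fin (n+1) => Bool)) pr}).toReal
              * g ((Fin.snocEquiv (fun _ : Fin (n+1) => Bool)) pr))
        (fun b => ((Measure.pi fun i : Fin (n+1) => bern (p i) (hp1 i)) {b}).toReal * g b)
        (fun pr => rfl)]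
      rw [Fintype.sum_prod_type, Fintype.sum_bool, ← Finset.sum_add_distrib]
      refine Finset.sum_congr rfl fun b' _ => ?_
      have e1 : (Fin.snocEquiv (fun _ : Fin (n+1) => Bool)) (true, b') = Fin.snoc b' true := rfl
      have e2 : (Fin.snocEquiv (fun _ : Fin (n+1) => Bool)) (false, b') = Fin.snoc b' false := rfl
      rw [e1, e2, hw' b']
      have hw : ∀ x : Bool,
          ((Measure.pi fun i : Fin (n+1) => bern (p i) (hp1 i)) {Fin.snoc b' x}).toReal
            = (∏ k : Fin n, ((bern (p (castSucc k)) (hp1 (castSucc k))) {b' k}).toReal)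
              * ((bern (p (last n)) (hp1 (last n))) {x}).toReal := by
        intro x
        rw [pi_singleton, Fin.prod_univ_castSucc, ENNReal.toReal_mul, ENNReal.toReal_prod]
        simp [Fin.snoc_castSucc, Fin.snoc_last]
      rw [hw true, hw false, bern_true (hp0 _) (hp1 _), bern_false (hp0 _) (hp1 _)]
      simp only [hhdef, hg₀def, hg₁def]
      ring
    calc ∫ ω, g (fun i => decide (X i ω = 1)) ∂μ
        = ∫ ω, (μ[f|sAlg X (last n)]) ω ∂μ := (integral_condExp (f := f) hF).symm
      _ ≤ ∫ ω, hfun (bitsF ω) ∂μ := step2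
      _ ≤ ∫ b, hfun b ∂(Measure.pi fun k : Fin n => bern (p (castSucc k)) (hp1 (castSucc k))) := step3
      _ = ∫ b, g b ∂(Measure.pi fun i : Fin (n+1) => bern (p i) (hp1 i)) := step4


/-- **Lemma 2.6 (Bernoulli domination)**: if `{0,1}`-valued random variables `X i` satisfy
`P[X i = 1 | X 0, …, X (i-1)] ≤ p i` almost surely, and `Y i` are independent `Bernoulli(p i)`
random variables, then for every `t ≥ 0` we have `P[Σ aᵢ Yᵢ ≥ t] ≥ P[Σ aᵢ Xᵢ ≥ t]`. -/
theorem bernoulli_domination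
    {Ω : Type} [MeasurableSpace Ω] (μ : Measure Ω) [IsProbabilityMeasure μ]
    (n : ℕ) (X : Fin n → Ω → ℝ) (p : Fin n → ℝ) (a : Fin n → ℝ)
    (hX : ∀ i, Measurable (X i))
    (hX01 : ∀ i ω, X i ω = 0 ∨ X i ω = 1)
    (hp0 : ∀ i, 0 ≤ p i) (hp1 : ∀ i, p i ≤ 1)
    (ha : ∀ i, 0 < a i)
    (hcond : ∀ i : Fin n, ∀ᵐ ω ∂μ,
      (MeasureTheory.condExp
          (⨆ (j : Fin n) (_ : j < i),
            MeasurableSpace.comap (X j) (inferInstance : MeasurableSpace ℝ))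
          μ (X i)) ω ≤ p i)
    (t : ℝ) (ht : 0 ≤ t) :
    μ {ω | t ≤ ∑ i, a i * X i ω} ≤
      (MeasureTheory.Measure.pi fun i : Fin n =>
          (PMF.bernoulli (Real.toNNReal (p i))
            (Real.toNNReal_le_one.mpr (hp1 i))).toMeasure)
        {b : Fin n → Bool | t ≤ ∑ i, a i * (if b i then (1 : ℝ) else 0)} := by
  classical
  set ν : Measure (Fin n → Bool) :=
    MeasureTheory.Measure.pi fun i : Fin n =>
      (PMF.bernoulli (Real.toNNReal (p i))
        (Real.toNNReal_le_one.mpr (hp1 i))).toMeasure with hν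
  set T : Set (Fin n → Bool) := {b | t ≤ ∑ i, a i * (if b i then (1 : ℝ) else 0)} with hT
  set S : Set Ω := {ω | t ≤ ∑ i, a i * X i ω} with hS
  set g : (Fin n → Bool) → ℝ :=
    fun b => if t ≤ ∑ i, a i * (if b i then (1 : ℝ) else 0) then 1 else 0 with hg
  have hg0 : ∀ b, 0 ≤ g b := by intro b; simp only [hg]; split <;> norm_num
  have hg1 : ∀ b, g b ≤ 1 := by intro b; simp only [hg]; split <;> norm_num
  have hmono : Monotone g := by
    intro b b' hb
    have hsum : ∑ i, a i * (if b i then (1:ℝ) else 0)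
        ≤ ∑ i, a i * (if b' i then (1:ℝ) else 0) := by
      refine Finset.sum_le_sum fun i _ => ?_
      by_cases hbi : b i
      · have hbi' : b' i = true := by
          have := hb i
          rw [hbi] at this
          exact Bool.le_iff_imp.mp this rfl
        simp [hbi, hbi']
      · have h0 : (0:ℝ) ≤ a i * (if b' i then (1:ℝ) else 0) := by
          split <;> simp [(ha i).le]
        simpa [hbi] using h0
    simp only [hg]
    split_ifs with h1 h2
    · norm_num
    · exact absurd (le_trans h1 hsum) h2
    · norm_num
    · norm_num
  have hmeasS : MeasurableSet S := by
    refine measurableSet_le measurable_const ?_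
    exact Finset.measurable_sum _ fun i _ => measurable_const.mul (hX i)
  have hLHS : ∫ ω, g (fun i => decide (X i ω = 1)) ∂μ = (μ S).toReal := by
    have heq : ∀ ω, g (fun i => decide (X i ω = 1)) = S.indicator (fun _ => (1:ℝ)) ω := by
      intro ω
      have hsum : ∑ i, a i * (if decide (X i ω = 1) then (1:ℝ) else 0) = ∑ i, a i * X i ω := by
        refine Finset.sum_congr rfl fun i _ => ?_
        rcases hX01 i ω with h | h <;> simp [h]
      simp only [hg, hsum, Set.indicator_apply, hS, Set.mem_setOf_eq]
    calc ∫ ω, g (fun i => decide (X i ω = 1)) ∂μ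
        = ∫ ω, S.indicator (fun _ => (1:ℝ)) ω ∂μ := by
          exact integral_congr_ae (Filter.Eventually.of_forall heq)
      _ = (μ S).toReal := by rw [integral_indicator_const _ hmeasS]; simp; rfl
  have hmeasT : MeasurableSet T := T.to_countable.measurableSet
  have hRHS : ∫ b, g b ∂ν = (ν T).toReal := by
    have heq : ∀ b, g b = T.indicator (fun _ => (1:ℝ)) b := by
      intro b
      simp only [hg, Set.indicator_apply, hT, Set.mem_setOf_eq]
    calc ∫ b, g b ∂ν = ∫ b, T.indicator (fun _ => (1:ℝ)) b ∂ν :=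
          integral_congr_ae (Filter.Eventually.of_forall heq)
      _ = (ν T).toReal := by rw [integral_indicator_const _ hmeasT]; simp; rfl
  have hkey := key μ n X p hX hX01 hp0 hp1 hcond g hg0 hg1 hmono
  rw [hLHS, hRHS] at hkey
  exact (ENNReal.toReal_le_toReal (measure_ne_top _ _) (measure_ne_top _ _)).mp hkey
end
end

section
/- Fix a prime power q and integers s > r ≥ 1. There exist constants C and c > 0 depending only on q and s such that for all sufficiently large n, all p with q^{−cn} ≤ p ≤ c, and every integer Δ ≥ 1, the following holds with probability tending to 1 as n → ∞ over L ~ Sam(Gr_q(n,r), p): there exist a collection 𝒮 ⊆ Gr_q(n,s)[L] and a set B ⊆ Gr_q(n,r−1) such that (a) every (r−1)-dimensional subspace of F_q^n is contained in at most p^{1/2}·q^n members of 𝒮; (b) |Gr_q(n,r−1) ∖ B| ≤ C·Δ·p^{1/2}·q^{(r−1)n}; and (c) for every S ∈ Gr_q(n,s)[L[B]], the reduction of ∂_{s,r}e_S modulo Δ lies in the subgroup of (Z/ΔZ)^{Gr_q(n,r)} generated by {∂_{s,r}e_{S'} mod Δ : S' ∈ 𝒮}. -/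
open scoped Classical

set_option linter.unusedSectionVars false
set_option maxHeartbeats 1000000

noncomputable section


/-- The type of `k`-dimensional `F`-linear subspaces of `F^n`. -/
abbrev Gr (F : Type) [Field F] (n k : ℕ) : Type :=
  {W : Submodule F (Fin n → F) // Module.finrank F W = k}

/-- The Gaussian binomial coefficient `[n choose k]_q` where `q = #F`. -/
def gbinom (F : Type) [Field F] [Fintype F] (n k : ℕ) : ℕ :=
  Nat.card (Gr F n k)

/-- `Gr_q(n,s)[L]`: the `s`-spaces all of whose `r`-dimensional subspaces lie in `L`. -/
def grIn (F : Type) [Field F] (n s r : ℕ) (L : Set (Gr F n r)) : Set (Gr F n s) :=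
  {S | ∀ R : Gr F n r, R.1 ≤ S.1 → R ∈ L}

/-- `L[B]`: the members of `L` all of whose `(r−1)`-dimensional subspaces lie in `B`. -/
def restr (F : Type) [Field F] (n r : ℕ) (L : Set (Gr F n r))
    (B : Set (Gr F n (r - 1))) : Set (Gr F n r) :=
  {R | R ∈ L ∧ ∀ Q : Gr F n (r - 1), Q.1 ≤ R.1 → Q ∈ B}

/-- The reduction of `∂_{s,r} e_S` modulo `Δ`, as a vector in `(ℤ/Δℤ)^{Gr_q(n,r)}`. -/
def modB (F : Type) [Field F] (n s r : ℕ) (Δ : ℕ) (S : Gr F n s) :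
    Gr F n r → ZMod Δ :=
  fun R => if R.1 ≤ S.1 then 1 else 0

/-- Property (P1): `𝒮 ⊆ Gr_q(n,s)[L]` and every `(r−1)`-space lies in at most
`p^{1/2}·q^n` members of `𝒮`. -/
def propP1 (F : Type) [Field F] [Fintype F] (n s r : ℕ) (p : ℝ)
    (L : Set (Gr F n r)) (𝒮 : Set (Gr F n s)) : Prop :=
  𝒮 ⊆ grIn F n s r L ∧
  ∀ Q : Gr F n (r - 1),
    ({S | S ∈ 𝒮 ∧ Q.1 ≤ S.1}.ncard : ℝ) ≤ p ^ ((1 : ℝ) / 2) * (Fintype.card F : ℝ) ^ n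

/-- Property (P2): `|Gr_q(n,r−1) ∖ B| ≤ C·Δ·p^{1/2}·q^{(r−1)n}` and for every
`S ∈ Gr_q(n,s)[L[B]]`, `∂_{s,r} e_S mod Δ` lies in the subgroup generated by
`{∂_{s,r} e_{S'} mod Δ : S' ∈ 𝒮}`. -/
def propP2 (F : Type) [Field F] [Fintype F] (n s r : ℕ) (C : ℝ) (Δ : ℕ) (p : ℝ)
    (L : Set (Gr F n r)) (𝒮 : Set (Gr F n s)) (B : Set (Gr F n (r - 1))) : Prop :=
  ((Bᶜ.ncard : ℝ) ≤ C * (Δ : ℝ) * p ^ ((1 : ℝ) / 2) *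
      (Fintype.card F : ℝ) ^ ((r - 1) * n)) ∧
  ∀ S ∈ grIn F n s r (restr F n r L B),
    modB F n s r Δ S ∈ AddSubgroup.closure {v | ∃ S' ∈ 𝒮, v = modB F n s r Δ S'}

/-- Property (P3): `L* ⊆ L[B]` is a regularized kernel: `|L*| = (1 ± Δp^{1/5})·p·[n,r]_q` and
every `R ∈ L*` has `(1 ± p^{1/5})·p^{b−1}·[n−r, s−r]_q` extensions to a member of
`Gr_q(n,s)[L[B]]`, where `b = [s,r]_q`. -/
def propP3 (F : Type) [Field F] [Fintype F] (n s r : ℕ) (Δ : ℕ) (p : ℝ)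
    (L : Set (Gr F n r)) (B : Set (Gr F n (r - 1))) (Lstar : Set (Gr F n r)) : Prop :=
  Lstar ⊆ restr F n r L B ∧
  ((1 - (Δ : ℝ) * p ^ ((1 : ℝ) / 5)) * p * (gbinom F n r : ℝ) ≤ (Lstar.ncard : ℝ) ∧
    (Lstar.ncard : ℝ) ≤ (1 + (Δ : ℝ) * p ^ ((1 : ℝ) / 5)) * p * (gbinom F n r : ℝ)) ∧
  ∀ R ∈ Lstar,
    (1 - p ^ ((1 : ℝ) / 5)) * p ^ (gbinom F s r - 1) *
        (gbinom F (n - r) (s - r) : ℝ) ≤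
      ({S | S ∈ grIn F n s r (restr F n r L B) ∧ R.1 ≤ S.1}.ncard : ℝ) ∧
    ({S | S ∈ grIn F n s r (restr F n r L B) ∧ R.1 ≤ S.1}.ncard : ℝ) ≤
      (1 + p ^ ((1 : ℝ) / 5)) * p ^ (gbinom F s r - 1) *
        (gbinom F (n - r) (s - r) : ℝ)

/-- The probability that `Sam(Gr_q(n,r), p)` lies in the event `E`. -/
def samP (F : Type) [Field F] [Fintype F] (n r : ℕ) (p : ℝ)
    (E : Set (Set (Gr F n r))) : ℝ :=
  ∑ᶠ L ∈ E, p ^ L.ncard * (1 - p) ^ Lᶜ.ncard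


namespace GSB
variable {α : Type*} [Fintype α]

def W (p : ℝ) (L : Set α) : ℝ := p ^ L.ncard * (1 - p) ^ (Lᶜ.ncard)

lemma finset_master (p : ℝ) (Tf : Finset α) :
    ∑ t : Finset α, (if Tf ⊆ t then p ^ t.card * (1 - p) ^ (Fintype.card α - t.card) else 0)
      = p ^ Tf.card := by
  classical
  rw [Finset.sum_ite, Finset.sum_const_zero, add_zero]
  set s : Finset α := Finset.univ \ Tf with hs
  have hsub : Tf ⊆ Finset.univ := Finset.subset_univ _
  have hscard : s.card = Fintype.card α - Tf.card := by
    simp [hs, Finset.card_sdiff_of_subset hsub]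
  have key : ∑ A ∈ s.powerset, p ^ A.card * (1 - p) ^ (s.card - A.card) = 1 := by
    have h := Finset.prod_add (fun _ : α => p) (fun _ : α => 1 - p) s
    simp only [add_sub_cancel, Finset.prod_const, one_pow] at h
    calc ∑ A ∈ s.powerset, p ^ A.card * (1 - p) ^ (s.card - A.card)
        = ∑ A ∈ s.powerset, p ^ A.card * (1 - p) ^ ((s \ A).card) :=
          Finset.sum_congr rfl (fun A hA => by
            rw [Finset.card_sdiff_of_subset (Finset.mem_powerset.1 hA)])
      _ = 1 := h.symm
  calc ∑ t ∈ Finset.univ.filter (fun t => Tf ⊆ t),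
        p ^ t.card * (1 - p) ^ (Fintype.card α - t.card)
      = ∑ A ∈ s.powerset, p ^ (A.card + Tf.card) * (1 - p) ^ (Fintype.card α - (A.card + Tf.card)) := by
        apply Finset.sum_nbij' (fun t => t \ Tf) (fun A => A ∪ Tf)
        · intro t ht
          rw [Finset.mem_filter] at ht
          rw [Finset.mem_powerset]
          intro x hx
          rw [Finset.mem_sdiff] at hx ⊢
          exact ⟨Finset.mem_univ x, hx.2⟩
        · intro A hA
          rw [Finset.mem_powerset] at hA
          rw [Finset.mem_filter]
          exact ⟨Finset.mem_univ _, Finset.subset_union_right⟩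
        · intro t ht
          rw [Finset.mem_filter] at ht
          exact Finset.sdiff_union_of_subset ht.2
        · intro A hA
          rw [Finset.mem_powerset] at hA
          apply Finset.union_sdiff_cancel_right
          rw [Finset.disjoint_left]
          intro x hx
          exact ((Finset.mem_sdiff.1 (hA hx)).2)
        · intro t ht
          rw [Finset.mem_filter] at ht
          have hle : Tf.card ≤ t.card := Finset.card_le_card ht.2
          have : (t \ Tf).card + Tf.card = t.card := by
            rw [Finset.card_sdiff_of_subset ht.2]
            omega
          rw [this]
    _ = p ^ Tf.card := by
        have : ∀ A ∈ s.powerset,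
            p ^ (A.card + Tf.card) * (1 - p) ^ (Fintype.card α - (A.card + Tf.card))
            = p ^ Tf.card * (p ^ A.card * (1 - p) ^ (s.card - A.card)) := by
          intro A hA
          rw [Finset.mem_powerset] at hA
          have hAcard : A.card ≤ s.card := Finset.card_le_card hA
          have h1 : Fintype.card α - (A.card + Tf.card) = s.card - A.card := by
            have := Finset.card_le_card hsub
            simp only [Finset.card_univ] at this ⊢
            omega
          rw [h1, pow_add]
          ring
        rw [Finset.sum_congr rfl this, ← Finset.mul_sum, key, mul_one]

lemma master (p : ℝ) (T : Set α) :
    ∑ L : Set α, (if T ⊆ L then W p L else 0) = p ^ T.ncard := by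
  classical
  rw [← Equiv.sum_comp (Fintype.finsetEquivSet (α := α))
    (fun L => if T ⊆ L then W p L else 0)]
  have : ∀ t : Finset α, (if T ⊆ (Fintype.finsetEquivSet t) then W p (Fintype.finsetEquivSet t) else 0)
      = (if T.toFinset ⊆ t then p ^ t.card * (1 - p) ^ (Fintype.card α - t.card) else 0) := by
    intro t
    rw [Fintype.finsetEquivSet_apply]
    congr 1
    · rw [eq_iff_iff, Set.toFinset_subset]
    · unfold W
      rw [Set.ncard_coe_finset, ← Finset.coe_compl, Set.ncard_coe_finset, Finset.card_compl]
  rw [Finset.sum_congr rfl (fun t _ => this t), finset_master]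
  rw [Set.ncard_eq_toFinset_card']


omit [Fintype α] in
lemma W_nonneg {p : ℝ} (h0 : 0 ≤ p) (h1 : p ≤ 1) (L : Set α) : 0 ≤ W p L :=
  mul_nonneg (pow_nonneg h0 _) (pow_nonneg (by linarith) _)

lemma ncard_real (L : Set α) : (L.ncard : ℝ) = ∑ R : α, (if R ∈ L then (1:ℝ) else 0) := by
  rw [Finset.sum_boole]
  congr 1
  rw [Set.ncard_eq_toFinset_card']
  congr 1
  ext x
  simp [Set.mem_toFinset]

lemma sum_W_one (p : ℝ) : ∑ L : Set α, W p L = 1 := by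
  have h := master p (∅ : Set α)
  simpa using h

lemma sum_W_card (p : ℝ) :
    ∑ L : Set α, W p L * (L.ncard : ℝ) = p * (Fintype.card α : ℝ) := by
  have h1 : ∀ L : Set α, W p L * (L.ncard : ℝ)
      = ∑ R : α, (if ({R} : Set α) ⊆ L then W p L else 0) := by
    intro L
    rw [ncard_real, Finset.mul_sum]
    apply Finset.sum_congr rfl
    intro R _
    by_cases h : R ∈ L <;> simp [h, Set.singleton_subset_iff]
  rw [Finset.sum_congr rfl (fun L _ => h1 L), Finset.sum_comm]
  have h2 : ∀ R : α, ∑ L : Set α, (if ({R} : Set α) ⊆ L then W p L else 0) = p := by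
    intro R
    rw [master]
    simp
  rw [Finset.sum_congr rfl (fun R _ => h2 R), Finset.sum_const, Finset.card_univ]
  simp [mul_comm]

lemma sum_W_sq (p : ℝ) :
    ∑ L : Set α, W p L * (L.ncard : ℝ)^2
      = p * (Fintype.card α : ℝ) + p^2 * ((Fintype.card α : ℝ)^2 - (Fintype.card α : ℝ)) := by
  have h1 : ∀ L : Set α, W p L * (L.ncard : ℝ)^2
      = ∑ R : α, ∑ R' : α, (if ({R, R'} : Set α) ⊆ L then W p L else 0) := by
    intro L
    rw [ncard_real, sq, Finset.sum_mul_sum, Finset.mul_sum]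
    refine Finset.sum_congr rfl (fun R _ => ?_)
    rw [Finset.mul_sum]
    refine Finset.sum_congr rfl (fun R' _ => ?_)
    by_cases h : R ∈ L <;> by_cases h' : R' ∈ L <;>
      simp [h, h', Set.insert_subset_iff, Set.singleton_subset_iff]
  rw [Finset.sum_congr rfl (fun L _ => h1 L)]
  rw [Finset.sum_comm]
  have h2 : ∀ R : α, ∑ L : Set α, ∑ R' : α, (if ({R, R'} : Set α) ⊆ L then W p L else 0)
      = p + ((Fintype.card α : ℝ) - 1) * p^2 := by
    intro R
    rw [Finset.sum_comm]
    have h3 : ∀ R' : α, ∑ L : Set α, (if ({R, R'} : Set α) ⊆ L then W p L else 0)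
        = if R' = R then p else p^2 := by
      intro R'
      rw [master]
      by_cases h : R' = R
      · subst h
        simp
      · have : ({R, R'} : Set α).ncard = 2 := Set.ncard_pair (Ne.symm h)
        rw [this, if_neg h]
    rw [Finset.sum_congr rfl (fun R' _ => h3 R')]
    have : ∀ R' : α, (if R' = R then p else p^2)
        = (if R' = R then p - p^2 else 0) + p^2 := by
      intro R'; by_cases h : R' = R <;> simp [h]
    rw [Finset.sum_congr rfl (fun R' _ => this R'), Finset.sum_add_distrib]
    rw [Finset.sum_ite_eq' Finset.univ R (fun _ => p - p^2)]
    simp only [Finset.mem_univ, if_true, Finset.sum_const, Finset.card_univ, nsmul_eq_mul]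
    ring
  rw [Finset.sum_congr rfl (fun R _ => h2 R), Finset.sum_const, Finset.card_univ, nsmul_eq_mul]
  ring

lemma sum_W_var (p : ℝ) :
    ∑ L : Set α, W p L * ((L.ncard : ℝ) - p * (Fintype.card α : ℝ))^2
      = p * (1 - p) * (Fintype.card α : ℝ) := by
  set N : ℝ := (Fintype.card α : ℝ)
  have expand : ∀ L : Set α, W p L * ((L.ncard : ℝ) - p * N)^2
      = W p L * (L.ncard : ℝ)^2 - (2 * (p*N)) * (W p L * (L.ncard : ℝ)) + (p*N)^2 * W p L := by
    intro L; ring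
  rw [Finset.sum_congr rfl (fun L _ => expand L)]
  rw [Finset.sum_add_distrib, Finset.sum_sub_distrib, ← Finset.mul_sum, ← Finset.mul_sum]
  rw [sum_W_sq, sum_W_card, sum_W_one]
  ring

lemma chebyshev {p : ℝ} (hp0 : 0 < p) (hp1 : p ≤ 1) (hN : 0 < (Fintype.card α : ℝ)) :
    ∑ L : Set α, (if 2 * p * (Fintype.card α : ℝ) < (L.ncard : ℝ) then W p L else 0)
      ≤ 1 / (p * (Fintype.card α : ℝ)) := by
  set N : ℝ := (Fintype.card α : ℝ)
  have hm : 0 < p * N := mul_pos hp0 hN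
  have pointwise : ∀ L : Set α,
      (if 2 * p * N < (L.ncard : ℝ) then W p L else 0)
        ≤ W p L * (((L.ncard : ℝ) - p * N)^2 / (p*N)^2) := by
    intro L
    by_cases h : 2 * p * N < (L.ncard : ℝ)
    · rw [if_pos h]
      have h1 : p * N ≤ (L.ncard : ℝ) - p * N := by linarith
      have h2 : (p*N)^2 ≤ ((L.ncard : ℝ) - p * N)^2 := by
        apply sq_le_sq' <;> nlinarith
      have h3 : 1 ≤ ((L.ncard : ℝ) - p * N)^2 / (p*N)^2 := by
        rw [le_div_iff₀ (by positivity)]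
        linarith
      nlinarith [W_nonneg hp0.le hp1 L]
    · rw [if_neg h]
      have hw := W_nonneg hp0.le hp1 L
      have h2 : (0:ℝ) ≤ ((L.ncard : ℝ) - p * N)^2 / (p*N)^2 := by positivity
      exact mul_nonneg hw h2
  calc ∑ L : Set α, (if 2 * p * N < (L.ncard : ℝ) then W p L else 0)
      ≤ ∑ L : Set α, W p L * (((L.ncard : ℝ) - p * N)^2 / (p*N)^2) :=
        Finset.sum_le_sum (fun L _ => pointwise L)
    _ = (∑ L : Set α, W p L * ((L.ncard : ℝ) - p * N)^2) / (p*N)^2 := by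
        rw [Finset.sum_div]
        exact Finset.sum_congr rfl (fun L _ => by ring)
    _ = p * (1-p) * N / (p*N)^2 := by rw [sum_W_var]
    _ ≤ 1 / (p * N) := by
        rw [div_le_div_iff₀ (by positivity) hm]
        nlinarith


end GSB

namespace GSB


variable {F : Type} [Field F] [Fintype F]

instance {n : ℕ} : Finite (Submodule F (Fin n → F)) :=
  Finite.of_injective (fun W => (W : Set (Fin n → F))) SetLike.coe_injective

noncomputable instance {n k : ℕ} : Fintype (Gr F n k) := Fintype.ofFinite _

lemma exists_span_fun {n k : ℕ} (W : Submodule F (Fin n → F))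
    (h : Module.finrank F W = k) :
    ∃ f : Fin k → (Fin n → F), (∀ i, f i ∈ W) ∧ Submodule.span F (Set.range f) = W := by
  let b := Module.finBasisOfFinrankEq F W h
  refine ⟨fun i => (b i : Fin n → F), fun i => (b i).2, ?_⟩
  have hr : Set.range (fun i => ((b i : W) : Fin n → F)) = W.subtype '' (Set.range b) := by
    rw [← Set.range_comp]; rfl
  rw [hr, ← Submodule.map_span, b.span_eq, Submodule.map_subtype_top]

lemma ncard_sub_le {n k : ℕ} (W : Submodule F (Fin n → F)) :
    {Q : Gr F n k | Q.1 ≤ W}.ncard ≤ Fintype.card ↥W ^ k := by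
  classical
  have hch : ∀ Q : {Q : Gr F n k // Q.1 ≤ W}, ∃ f : Fin k → (Fin n → F),
      (∀ i, f i ∈ Q.1.1) ∧ Submodule.span F (Set.range f) = Q.1.1 :=
    fun Q => exists_span_fun Q.1.1 Q.1.2
  choose f hf1 hf2 using hch
  have inj : Function.Injective
      (fun Q : {Q : Gr F n k // Q.1 ≤ W} => (fun i => (⟨f Q i, Q.2 (hf1 Q i)⟩ : ↥W))) := by
    intro Q Q' h
    have hfe : f Q = f Q' := by
      funext i
      exact congrArg Subtype.val (congrFun h i)
    apply Subtype.ext; apply Subtype.ext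
    rw [← hf2 Q, ← hf2 Q', hfe]
  calc {Q : Gr F n k | Q.1 ≤ W}.ncard
      = Nat.card {Q : Gr F n k // Q.1 ≤ W} := (Nat.card_coe_set_eq _).symm
    _ ≤ Nat.card (Fin k → ↥W) := Nat.card_le_card_of_injective _ inj
    _ = Fintype.card ↥W ^ k := by
        rw [Nat.card_fun, Nat.card_eq_fintype_card, Nat.card_eq_fintype_card,
          Fintype.card_fin]

lemma card_sub_eq {n : ℕ} (W : Submodule F (Fin n → F)) :
    Fintype.card ↥W = Fintype.card F ^ (Module.finrank F ↥W) :=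
  Module.card_eq_pow_finrank

lemma card_gr_le {n k : ℕ} : Nat.card (Gr F n k) ≤ Fintype.card F ^ (n * k) := by
  have h := ncard_sub_le (F := F) (n := n) (k := k) ⊤
  have huniv : {Q : Gr F n k | Q.1 ≤ ⊤} = Set.univ := by
    ext Q; simp
  rw [huniv, Set.ncard_univ] at h
  refine h.trans ?_
  rw [card_sub_eq]
  rw [← pow_mul]
  apply Nat.pow_le_pow_right (Fintype.card_pos)
  have : Module.finrank F ↥(⊤ : Submodule F (Fin n → F)) = n := by
    rw [finrank_top, Module.finrank_pi]
    simp
  rw [this]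

lemma card_gr_ge {n r : ℕ} (hrn : r ≤ n) :
    Fintype.card F ^ (r * (n - r)) ≤ Nat.card (Gr F n r) := by
  classical
  have hn : r + (n - r) = n := by omega
  let e : ((Fin r → F) × (Fin (n - r) → F)) ≃ₗ[F] (Fin n → F) :=
    (LinearEquiv.sumArrowLequivProdArrow (Fin r) (Fin (n - r)) F F).symm.trans
      ((LinearEquiv.funCongrLeft F F (finSumFinEquiv.trans (finCongr hn))).symm)
  have hrankfin : Module.finrank F (Fin r → F) = r := by
    rw [Module.finrank_pi]; simp
  have graph_rank : ∀ A : (Fin r → F) →ₗ[F] (Fin (n - r) → F),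
      Module.finrank F A.graph = r := by
    intro A
    rw [LinearMap.graph_eq_range_prod]
    have hinj : Function.Injective (LinearMap.id.prod A) := by
      intro x y hxy
      have := congrArg Prod.fst hxy
      simpa using this
    rw [LinearMap.finrank_range_of_inj hinj, hrankfin]
  let g : ((Fin r → F) →ₗ[F] (Fin (n - r) → F)) → Gr F n r := fun A =>
    ⟨Submodule.map (e : ((Fin r → F) × (Fin (n - r) → F)) →ₗ[F] (Fin n → F)) A.graph, by
      rw [LinearEquiv.finrank_map_eq]
      exact graph_rank A⟩
  have hginj : Function.Injective g := by
    intro A B hAB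
    have h1 : Submodule.map (e : ((Fin r → F) × (Fin (n - r) → F)) →ₗ[F] (Fin n → F)) A.graph
        = Submodule.map (e : ((Fin r → F) × (Fin (n - r) → F)) →ₗ[F] (Fin n → F)) B.graph :=
      congrArg Subtype.val hAB
    have h2 : A.graph = B.graph :=
      Submodule.map_injective_of_injective
        (f := (e : ((Fin r → F) × (Fin (n - r) → F)) →ₗ[F] (Fin n → F))) e.injective h1
    apply LinearMap.ext; intro x
    have hx : (x, A x) ∈ A.graph := by rw [LinearMap.mem_graph_iff]
    rw [h2, LinearMap.mem_graph_iff] at hx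
    exact hx
  let g' := fun (v : Fin (n - r) → Fin r → F) => g (Matrix.toLin' (Matrix.of v))
  have hg'inj : Function.Injective g' := by
    intro v w hvw
    have := hginj hvw
    have h2 := congrArg (Matrix.toLin'.symm) (congrArg id this)
    simpa using h2
  calc Fintype.card F ^ (r * (n - r))
      = Nat.card (Fin (n - r) → Fin r → F) := by
        rw [Nat.card_fun, Nat.card_fun, Nat.card_eq_fintype_card,
          Nat.card_eq_fintype_card, Nat.card_eq_fintype_card, Fintype.card_fin,
          Fintype.card_fin, ← pow_mul, mul_comm]
    _ ≤ Nat.card (Gr F n r) := Nat.card_le_card_of_injective g' hg'inj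

lemma exists_between {n a : ℕ} {Q S : Submodule F (Fin n → F)}
    (hQ : Module.finrank F Q = a) (hS : a < Module.finrank F S) (hQS : Q ≤ S) :
    ∃ R : Submodule F (Fin n → F), Q ≤ R ∧ R ≤ S ∧ Module.finrank F R = a + 1 := by
  have hne : Q ≠ S := fun h => by rw [h] at hQ; omega
  have hlt : Q < S := lt_of_le_of_ne hQS hne
  obtain ⟨v, hvS, hvQ⟩ := SetLike.exists_of_lt hlt
  have hv0 : v ≠ 0 := fun h => hvQ (h ▸ Q.zero_mem)
  refine ⟨Q ⊔ Submodule.span F {v}, le_sup_left, ?_, ?_⟩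
  · exact sup_le hQS ((Submodule.span_singleton_le_iff_mem v S).2 hvS)
  · have hinf : Q ⊓ Submodule.span F {v} = ⊥ := by
      rw [eq_bot_iff]
      rintro x ⟨hxQ, hxv⟩
      obtain ⟨c, rfl⟩ := Submodule.mem_span_singleton.1 hxv
      rcases eq_or_ne c 0 with rfl | hc
      · simp
      · exfalso
        apply hvQ
        have : c⁻¹ • (c • v) ∈ Q := Q.smul_mem _ hxQ
        rwa [smul_smul, inv_mul_cancel₀ hc, one_smul] at this
    have := Submodule.finrank_sup_add_finrank_inf_eq Q (Submodule.span F {v})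
    rw [hinf, hQ, finrank_span_singleton hv0, finrank_bot, add_zero] at this
    exact this

lemma chain_card {G : Type*} [AddGroup G] [Finite G] {β : Type*} (f : β → G)
    (T : Finset β) (hT : ∀ b ∈ T, f b ∉ AddSubgroup.closure (f '' ((T : Set β) \ {b}))) :
    2 ^ T.card ≤ Nat.card (AddSubgroup.closure (f '' (T : Set β))) := by
  classical
  induction T using Finset.induction_on with
  | empty =>
      simpa using Nat.one_le_iff_ne_zero.2 Nat.card_pos.ne'
  | @insert b T' hb ih =>
      have hT' : ∀ b' ∈ T', f b' ∉ AddSubgroup.closure (f '' ((T' : Set β) \ {b'})) := by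
        intro b' hb'
        intro hmem
        apply hT b' (Finset.mem_insert_of_mem hb')
        refine AddSubgroup.closure_mono (Set.image_mono ?_) hmem
        apply Set.diff_subset_diff_left
        rw [Finset.coe_insert]
        exact Set.subset_insert _ _
      have ihT' := ih hT'
      set H' := AddSubgroup.closure (f '' (T' : Set β)) with hH'
      set H := AddSubgroup.closure (f '' ((insert b T' : Finset β) : Set β)) with hH
      have hle : H' ≤ H := by
        apply AddSubgroup.closure_mono (Set.image_mono _)
        rw [Finset.coe_insert]
        exact Set.subset_insert _ _
      have hfbH : f b ∈ H := by
        apply AddSubgroup.subset_closure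
        exact Set.mem_image_of_mem f (by rw [Finset.coe_insert]; exact Set.mem_insert _ _)
      have hfbH' : f b ∉ H' := by
        have h1 := hT b (Finset.mem_insert_self b T')
        have h2 : ((insert b T' : Finset β) : Set β) \ {b} = (T' : Set β) := by
          rw [Finset.coe_insert]
          ext x
          by_cases hx : x = b
          · subst hx; simp [hb]
          · simp [hx]
        rwa [h2] at h1
      have hne : H' ≠ H := fun h => hfbH' (h ▸ hfbH)
      obtain ⟨k, hk⟩ := AddSubgroup.card_dvd_of_le hle
      have hpos : 0 < Nat.card H := Nat.card_pos
      have hpos' : 0 < Nat.card H' := Nat.card_pos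
      have hk1 : k ≠ 1 := by
        rintro rfl
        rw [mul_one] at hk
        apply hne
        apply SetLike.coe_injective
        apply Set.eq_of_subset_of_ncard_le (SetLike.coe_subset_coe.2 hle)
        rw [← Nat.card_coe_set_eq, ← Nat.card_coe_set_eq,
          SetLike.coe_sort_coe, SetLike.coe_sort_coe]
        exact hk.le
      have hk0 : k ≠ 0 := by
        rintro rfl
        rw [mul_zero] at hk
        omega
      have h2k : 2 * Nat.card H' ≤ Nat.card H := by
        rw [hk]
        have : 2 ≤ k := by omega
        calc 2 * Nat.card H' ≤ k * Nat.card H' := Nat.mul_le_mul_right _ this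
          _ = Nat.card H' * k := mul_comm _ _
      calc 2 ^ (insert b T').card = 2 * 2 ^ T'.card := by
            rw [Finset.card_insert_of_notMem hb, pow_succ, mul_comm]
        _ ≤ 2 * Nat.card H' := by omega
        _ ≤ Nat.card H := h2k

def dgr (F : Type) [Field F] (n s r : ℕ) (𝒮 : Set (Gr F n s)) (Q : Gr F n (r-1)) : ℕ :=
  {S | S ∈ 𝒮 ∧ Q.1 ≤ S.1}.ncard

def clo (F : Type) [Field F] (n s r Δ : ℕ) (𝒮 : Set (Gr F n s)) :
    AddSubgroup (Gr F n r → ZMod Δ) :=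
  AddSubgroup.closure {v | ∃ S' ∈ 𝒮, v = modB F n s r Δ S'}

lemma clo_image (n s r Δ : ℕ) (𝒮 : Set (Gr F n s)) :
    clo F n s r Δ 𝒮 = AddSubgroup.closure (modB F n s r Δ '' 𝒮) := by
  unfold clo
  congr 1
  ext v
  constructor
  · rintro ⟨S', h, rfl⟩; exact ⟨S', h, rfl⟩
  · rintro ⟨S', h, rfl⟩; exact ⟨S', h, rfl⟩

lemma clo_mono {n s r Δ : ℕ} {A B : Set (Gr F n s)} (h : A ⊆ B) :
    clo F n s r Δ A ≤ clo F n s r Δ B := by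
  apply AddSubgroup.closure_mono
  rintro v ⟨S', hS', rfl⟩
  exact ⟨S', h hS', rfl⟩

lemma dgr_mono {n s r : ℕ} {A B : Set (Gr F n s)} (h : A ⊆ B) (Q : Gr F n (r-1)) :
    dgr F n s r A Q ≤ dgr F n s r B Q :=
  Set.ncard_le_ncard (fun S hS => ⟨h hS.1, hS.2⟩) (Set.toFinite _)

lemma clo_card_le {n s r Δ : ℕ} (hΔ : 1 ≤ Δ) {L : Set (Gr F n r)} {𝒮 : Set (Gr F n s)}
    (h𝒮 : 𝒮 ⊆ grIn F n s r L) :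
    Nat.card (clo F n s r Δ 𝒮) ≤ Δ ^ L.ncard := by
  haveI : NeZero Δ := ⟨by omega⟩
  set K : AddSubgroup (Gr F n r → ZMod Δ) := AddSubgroup.pi Lᶜ (fun _ => ⊥) with hK
  have hle : clo F n s r Δ 𝒮 ≤ K := by
    apply (AddSubgroup.closure_le _).2
    rintro v ⟨S', hS', rfl⟩
    rw [SetLike.mem_coe, hK, AddSubgroup.mem_pi]
    intro R hR
    rw [AddSubgroup.mem_bot]
    unfold modB
    rw [if_neg]
    intro hle'
    exact hR (h𝒮 hS' R hle')
  have hinj : Function.Injective (fun (g : K) => (fun (R : L) => g.1 R.1)) := by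
    intro g g' hgg
    apply Subtype.ext
    funext R
    by_cases hR : R ∈ L
    · exact congrFun hgg ⟨R, hR⟩
    · have h1 : g.1 R ∈ (⊥ : AddSubgroup (ZMod Δ)) :=
        (AddSubgroup.mem_pi _).1 g.2 R hR
      have h2 : g'.1 R ∈ (⊥ : AddSubgroup (ZMod Δ)) :=
        (AddSubgroup.mem_pi _).1 g'.2 R hR
      rw [AddSubgroup.mem_bot] at h1 h2
      rw [h1, h2]
  calc Nat.card (clo F n s r Δ 𝒮) ≤ Nat.card K :=
        Nat.le_of_dvd Nat.card_pos (AddSubgroup.card_dvd_of_le hle)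
    _ ≤ Nat.card (↥L → ZMod Δ) := Nat.card_le_card_of_injective _ hinj
    _ = Δ ^ L.ncard := by
        rw [Nat.card_fun, Nat.card_zmod, Nat.card_coe_set_eq]

lemma sum_dgr_le {n s r : ℕ} (𝒮 : Set (Gr F n s)) (hss : ∀ S ∈ 𝒮, True) :
    ∑ Q : Gr F n (r-1), dgr F n s r 𝒮 Q ≤ 𝒮.ncard * (Fintype.card F) ^ (s * (r-1)) := by
  classical
  have h1 : ∀ Q : Gr F n (r-1), dgr F n s r 𝒮 Q
      = ∑ S : Gr F n s, (if S ∈ 𝒮 ∧ Q.1 ≤ S.1 then 1 else 0) := by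
    intro Q
    unfold dgr
    have ht : {S | S ∈ 𝒮 ∧ Q.1 ≤ S.1}.toFinset
        = Finset.univ.filter (fun S : Gr F n s => S ∈ 𝒮 ∧ Q.1 ≤ S.1) := by
      ext S; simp [Set.mem_toFinset]
    rw [Set.ncard_eq_toFinset_card', ht, Finset.card_filter]
  rw [Finset.sum_congr rfl (fun Q _ => h1 Q), Finset.sum_comm]
  have h2 : ∀ S : Gr F n s,
      (∑ Q : Gr F n (r-1), if S ∈ 𝒮 ∧ Q.1 ≤ S.1 then 1 else 0)
      ≤ (if S ∈ 𝒮 then (Fintype.card F) ^ (s * (r-1)) else 0) := by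
    intro S
    by_cases hS : S ∈ 𝒮
    · rw [if_pos hS]
      have e1 : (∑ Q : Gr F n (r-1), if S ∈ 𝒮 ∧ Q.1 ≤ S.1 then 1 else 0)
          = {Q : Gr F n (r-1) | Q.1 ≤ S.1}.ncard := by
        have ht : {Q : Gr F n (r-1) | Q.1 ≤ S.1}.toFinset
            = Finset.univ.filter (fun Q : Gr F n (r-1) => S ∈ 𝒮 ∧ Q.1 ≤ S.1) := by
          ext Q; simp [Set.mem_toFinset, hS]
        rw [Set.ncard_eq_toFinset_card', ht, Finset.card_filter]
      rw [e1]
      calc {Q : Gr F n (r-1) | Q.1 ≤ S.1}.ncard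
          ≤ Fintype.card ↥S.1 ^ (r-1) := ncard_sub_le S.1
        _ = (Fintype.card F) ^ (s * (r-1)) := by
            rw [card_sub_eq, S.2, ← pow_mul]
    · rw [if_neg hS]
      have : ∀ Q : Gr F n (r-1), (if S ∈ 𝒮 ∧ Q.1 ≤ S.1 then 1 else 0) = 0 := by
        intro Q
        rw [if_neg]
        rintro ⟨h, _⟩
        exact hS h
      rw [Finset.sum_congr rfl (fun Q _ => this Q)]
      simp
  calc ∑ S : Gr F n s, (∑ Q : Gr F n (r-1), if S ∈ 𝒮 ∧ Q.1 ≤ S.1 then 1 else 0)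
      ≤ ∑ S : Gr F n s, (if S ∈ 𝒮 then (Fintype.card F) ^ (s * (r-1)) else 0) :=
        Finset.sum_le_sum (fun S _ => h2 S)
    _ = 𝒮.ncard * (Fintype.card F) ^ (s * (r-1)) := by
        rw [Finset.sum_ite, Finset.sum_const_zero, add_zero, Finset.sum_const, smul_eq_mul]
        congr 1
        rw [Set.ncard_eq_toFinset_card']
        congr 1
        ext S
        simp [Set.mem_toFinset]

lemma core {n s r : ℕ} (hr : 1 ≤ r) (hrs : r < s) (Δ : ℕ) (hΔ : 1 ≤ Δ) (p : ℝ)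
    (hp0 : 0 < p) (hp1 : p ≤ 1)
    (hD2 : (2:ℝ) ≤ p ^ ((1:ℝ)/2) * (Fintype.card F : ℝ) ^ n)
    (L : Set (Gr F n r))
    (hL : (L.ncard : ℝ) ≤ 2 * p * ((Fintype.card F : ℝ) ^ (n*r))) :
    ∃ (𝒮 : Set (Gr F n s)) (B : Set (Gr F n (r - 1))),
      propP1 F n s r p L 𝒮 ∧
      propP2 F n s r (4 * (Fintype.card F : ℝ)^(s*s)) Δ p L 𝒮 B := by
  classical
  haveI : NeZero Δ := ⟨by omega⟩
  set q : ℝ := (Fintype.card F : ℝ) with hq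
  have hq1 : (1:ℝ) ≤ q := by
    rw [hq]; exact_mod_cast Fintype.card_pos
  set D : ℝ := p ^ ((1:ℝ)/2) * q ^ n with hD
  have hD0 : 0 < D := by linarith
  set Fam : Set (Set (Gr F n s)) :=
    {𝒮 | 𝒮 ⊆ grIn F n s r L ∧ ∀ Q : Gr F n (r-1), (dgr F n s r 𝒮 Q : ℝ) ≤ D} with hFam
  have hEm : (∅ : Set (Gr F n s)) ∈ Fam := by
    constructor
    · exact Set.empty_subset _
    · intro Q
      have he : dgr F n s r (∅ : Set (Gr F n s)) Q = 0 := by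
        unfold dgr
        convert Set.ncard_empty (Gr F n s) using 2
        ext S; simp
      rw [he]; push_cast; linarith
  obtain ⟨𝒮₁, h𝒮₁, hmax₁⟩ := Set.exists_max_image Fam (fun 𝒮 => Nat.card (clo F n s r Δ 𝒮))
    (Set.toFinite Fam) ⟨∅, hEm⟩
  obtain ⟨𝒮, h𝒮mem, hmin⟩ := Set.exists_min_image
    {𝒮 ∈ Fam | Nat.card (clo F n s r Δ 𝒮₁) ≤ Nat.card (clo F n s r Δ 𝒮)} Set.ncard
    (Set.toFinite _) ⟨𝒮₁, h𝒮₁, le_refl _⟩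
  obtain ⟨⟨h𝒮T, h𝒮deg⟩, h𝒮cl⟩ := h𝒮mem
  have hmax : ∀ 𝒮' ∈ Fam, Nat.card (clo F n s r Δ 𝒮') ≤ Nat.card (clo F n s r Δ 𝒮) :=
    fun 𝒮' h => (hmax₁ 𝒮' h).trans h𝒮cl
  set X : Set (Gr F n (r-1)) := {Q | D < (dgr F n s r 𝒮 Q : ℝ) + 1} with hX
  refine ⟨𝒮, Xᶜ, ⟨h𝒮T, h𝒮deg⟩, ?_, ?_⟩
  · -- (P2a) : cardinality bound on X
    -- irredundancy
    have hirred : ∀ S ∈ 𝒮, modB F n s r Δ S ∉ clo F n s r Δ (𝒮 \ {S}) := by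
      intro S hS hmem
      have hcleq : clo F n s r Δ (𝒮 \ {S}) = clo F n s r Δ 𝒮 := by
        apply le_antisymm (clo_mono Set.diff_subset)
        apply (AddSubgroup.closure_le _).2
        rintro v ⟨S', hS', rfl⟩
        by_cases h : S' = S
        · subst h; exact hmem
        · exact AddSubgroup.subset_closure ⟨S', ⟨hS', h⟩, rfl⟩
      have hmem' : 𝒮 \ {S} ∈
          {𝒮 ∈ Fam | Nat.card (clo F n s r Δ 𝒮₁) ≤ Nat.card (clo F n s r Δ 𝒮)} := by
        refine ⟨⟨Set.diff_subset.trans h𝒮T, ?_⟩, ?_⟩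
        · intro Q
          exact le_trans (by exact_mod_cast dgr_mono Set.diff_subset Q) (h𝒮deg Q)
        · rw [hcleq]; exact h𝒮cl
      have hge := hmin _ hmem'
      have hlt : (𝒮 \ {S}).ncard < 𝒮.ncard :=
        Set.ncard_diff_singleton_lt_of_mem hS (Set.toFinite _)
      omega
    -- chain bound
    have hchain : 2 ^ 𝒮.ncard ≤ Nat.card (clo F n s r Δ 𝒮) := by
      have happ := chain_card (modB F n s r Δ) 𝒮.toFinset ?_
      · rw [Set.coe_toFinset] at happ
        rw [← clo_image] at happ
        rwa [Set.ncard_eq_toFinset_card']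
      · intro S hS
        rw [Set.coe_toFinset, ← clo_image]
        exact hirred S ((Set.mem_toFinset).1 hS)
    -- size of 𝒮
    have h𝒮size : 𝒮.ncard ≤ Δ * L.ncard := by
      have h1 : 2 ^ 𝒮.ncard ≤ Δ ^ L.ncard := hchain.trans (clo_card_le hΔ h𝒮T)
      have h2 : Δ ^ L.ncard ≤ 2 ^ (Δ * L.ncard) := by
        rw [pow_mul]
        exact Nat.pow_le_pow_left (Nat.lt_two_pow_self (n := Δ)).le _
      have := h1.trans h2
      exact (Nat.pow_le_pow_iff_right (by omega)).1 this
    -- degree sum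
    have hsum : ∑ Q : Gr F n (r-1), dgr F n s r 𝒮 Q
        ≤ 𝒮.ncard * (Fintype.card F) ^ (s * (r-1)) := sum_dgr_le 𝒮 (fun _ _ => trivial)
    -- bound X.ncard
    have hXbound : (X.ncard : ℝ) * (D / 2) ≤ (∑ Q : Gr F n (r-1), dgr F n s r 𝒮 Q : ℕ) := by
      have hXle : ∀ Q ∈ X.toFinset, D / 2 ≤ (dgr F n s r 𝒮 Q : ℝ) := by
        intro Q hQ
        have hQX : Q ∈ X := Set.mem_toFinset.1 hQ
        rw [hX] at hQX
        have hQX' : D < (dgr F n s r 𝒮 Q : ℝ) + 1 := hQX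
        linarith
      calc (X.ncard : ℝ) * (D / 2) = ∑ _Q ∈ X.toFinset, (D / 2) := by
            rw [Finset.sum_const, nsmul_eq_mul, Set.ncard_eq_toFinset_card']
        _ ≤ ∑ Q ∈ X.toFinset, (dgr F n s r 𝒮 Q : ℝ) := Finset.sum_le_sum hXle
        _ ≤ ∑ Q : Gr F n (r-1), (dgr F n s r 𝒮 Q : ℝ) := by
            apply Finset.sum_le_sum_of_subset_of_nonneg (Finset.subset_univ _)
            intro Q _ _
            positivity
        _ = ((∑ Q : Gr F n (r-1), dgr F n s r 𝒮 Q : ℕ) : ℝ) := by push_cast; rfl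
    -- combine into numeric bound
    have hphalf : p ^ ((1:ℝ)/2) * p ^ ((1:ℝ)/2) = p := by
      rw [← Real.rpow_add hp0]; norm_num
    have hqpow : q ^ (n*r) = q ^ n * q ^ ((r-1)*n) := by
      rw [← pow_add]
      congr 1
      cases r with
      | zero => omega
      | succ r' =>
          simp only [Nat.succ_sub_one]
          ring
    have hqss : q ^ (s*(r-1)) ≤ q ^ (s*s) := by
      apply pow_le_pow_right₀ hq1
      exact Nat.mul_le_mul_left s (by omega)
    have hA0 : (0:ℝ) ≤ q ^ (s*(r-1)) := by positivity
    have hchainR : (X.ncard : ℝ) * D ≤ 4 * Δ * p * (q ^ n * q ^ ((r-1)*n)) * q ^ (s*(r-1)) := by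
      have h2 : ((∑ Q : Gr F n (r-1), dgr F n s r 𝒮 Q : ℕ) : ℝ)
          ≤ (𝒮.ncard : ℝ) * q ^ (s*(r-1)) := by
        rw [hq]
        exact_mod_cast hsum
      have h3 : (𝒮.ncard : ℝ) ≤ (Δ : ℝ) * (L.ncard : ℝ) := by exact_mod_cast h𝒮size
      have h4 : (L.ncard : ℝ) ≤ 2*p*(q^n * q^((r-1)*n)) := by rw [← hqpow]; exact hL
      have hΔ0 : (0:ℝ) ≤ (Δ:ℝ) := by positivity
      calc (X.ncard : ℝ) * D ≤ 2 * ((∑ Q : Gr F n (r-1), dgr F n s r 𝒮 Q : ℕ) : ℝ) := by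
            linarith [hXbound]
        _ ≤ 2 * ((𝒮.ncard : ℝ) * q ^ (s*(r-1))) := by linarith [h2]
        _ ≤ 2 * (((Δ : ℝ) * (L.ncard : ℝ)) * q ^ (s*(r-1))) := by
            have := mul_le_mul_of_nonneg_right h3 hA0
            linarith [this]
        _ ≤ 2 * (((Δ : ℝ) * (2*p*(q^n * q^((r-1)*n)))) * q ^ (s*(r-1))) := by
            have h5 : (Δ : ℝ) * (L.ncard : ℝ) ≤ (Δ : ℝ) * (2*p*(q^n * q^((r-1)*n))) :=
              mul_le_mul_of_nonneg_left h4 hΔ0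
            have := mul_le_mul_of_nonneg_right h5 hA0
            linarith [this]
        _ = 4 * Δ * p * (q ^ n * q ^ ((r-1)*n)) * q ^ (s*(r-1)) := by ring
    have hfinal : (X.ncard : ℝ) * D ≤ (4 * q^(s*s) * Δ * p^((1:ℝ)/2) * q^((r-1)*n)) * D := by
      calc (X.ncard : ℝ) * D ≤ 4 * Δ * p * (q ^ n * q ^ ((r-1)*n)) * q ^ (s*(r-1)) := hchainR
        _ ≤ 4 * Δ * p * (q ^ n * q ^ ((r-1)*n)) * q ^ (s*s) := by
            apply mul_le_mul_of_nonneg_left hqss (by positivity)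
        _ = 4 * Δ * (p^((1:ℝ)/2) * p^((1:ℝ)/2)) * (q ^ n * q ^ ((r-1)*n)) * q ^ (s*s) := by
            rw [hphalf]
        _ = (4 * q^(s*s) * Δ * p^((1:ℝ)/2) * q^((r-1)*n)) * D := by rw [hD]; ring
    have hgoal : (X.ncard : ℝ) ≤ 4 * q^(s*s) * Δ * p^((1:ℝ)/2) * q^((r-1)*n) :=
      le_of_mul_le_mul_right hfinal hD0
    rw [compl_compl]
    exact hgoal
  · -- (P2b): spanning
    intro S hS
    have hST : S ∈ grIn F n s r L := by
      intro R hR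
      exact (hS R hR).1
    have hQB : ∀ Q : Gr F n (r-1), Q.1 ≤ S.1 → Q ∉ X := by
      intro Q hQS
      have hrankQ : Module.finrank F Q.1 = r - 1 := Q.2
      have hltS : r - 1 < Module.finrank F S.1 := by rw [S.2]; omega
      obtain ⟨R', hQR, hRS, hrankR⟩ := exists_between hrankQ hltS hQS
      have hrr : r - 1 + 1 = r := by omega
      have hRmem : (⟨R', by rw [hrankR, hrr]⟩ : Gr F n r) ∈ restr F n r L Xᶜ :=
        hS _ hRS
      exact hRmem.2 Q hQR
    by_contra hnot
    have hins : insert S 𝒮 ∈ Fam := by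
      constructor
      · exact Set.insert_subset hST h𝒮T
      · intro Q
        by_cases hQS : Q.1 ≤ S.1
        · have hQX : Q ∉ X := hQB Q hQS
          have hdeg1 : (dgr F n s r 𝒮 Q : ℝ) + 1 ≤ D := by
            have : ¬ (D < (dgr F n s r 𝒮 Q : ℝ) + 1) := hQX
            linarith [not_lt.1 this]
          have hsub : {S' | S' ∈ insert S 𝒮 ∧ Q.1 ≤ S'.1}
              ⊆ insert S {S' | S' ∈ 𝒮 ∧ Q.1 ≤ S'.1} := by
            rintro S' ⟨hS', hQ'⟩
            rcases hS' with rfl | hS'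
            · exact Set.mem_insert _ _
            · exact Set.mem_insert_of_mem _ ⟨hS', hQ'⟩
          have hdle : dgr F n s r (insert S 𝒮) Q ≤ dgr F n s r 𝒮 Q + 1 := by
            unfold dgr
            calc {S' | S' ∈ insert S 𝒮 ∧ Q.1 ≤ S'.1}.ncard
                ≤ (insert S {S' | S' ∈ 𝒮 ∧ Q.1 ≤ S'.1}).ncard :=
                  Set.ncard_le_ncard hsub (Set.toFinite _)
              _ ≤ {S' | S' ∈ 𝒮 ∧ Q.1 ≤ S'.1}.ncard + 1 := Set.ncard_insert_le _ _
          calc (dgr F n s r (insert S 𝒮) Q : ℝ)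
              ≤ (dgr F n s r 𝒮 Q : ℝ) + 1 := by exact_mod_cast hdle
            _ ≤ D := hdeg1
        · have heq : {S' | S' ∈ insert S 𝒮 ∧ Q.1 ≤ S'.1} = {S' | S' ∈ 𝒮 ∧ Q.1 ≤ S'.1} := by
            ext S'
            constructor
            · rintro ⟨hS', hQ'⟩
              rcases hS' with rfl | h
              · exact absurd hQ' hQS
              · exact ⟨h, hQ'⟩
            · rintro ⟨h, hQ'⟩
              exact ⟨Set.mem_insert_of_mem _ h, hQ'⟩
          have hdeq : dgr F n s r (insert S 𝒮) Q = dgr F n s r 𝒮 Q := by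
            unfold dgr; rw [heq]
          rw [hdeq]
          exact h𝒮deg Q
    have hltcard : Nat.card (clo F n s r Δ 𝒮) < Nat.card (clo F n s r Δ (insert S 𝒮)) := by
      have hssub : ((clo F n s r Δ 𝒮 : AddSubgroup _) : Set (Gr F n r → ZMod Δ))
          ⊂ ((clo F n s r Δ (insert S 𝒮) : AddSubgroup _) : Set (Gr F n r → ZMod Δ)) := by
        constructor
        · exact SetLike.coe_subset_coe.2 (clo_mono (Set.subset_insert _ _))
        · intro hsup
          apply hnot
          have hin : modB F n s r Δ S ∈ clo F n s r Δ (insert S 𝒮) :=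
            AddSubgroup.subset_closure ⟨S, Set.mem_insert _ _, rfl⟩
          exact hsup hin
      have := Set.ncard_lt_ncard hssub (Set.toFinite _)
      rwa [← Nat.card_coe_set_eq, ← Nat.card_coe_set_eq,
        SetLike.coe_sort_coe, SetLike.coe_sort_coe] at this
    exact absurd (hmax _ hins) (not_le.2 hltcard)

lemma samP_eq {n r : ℕ} (p : ℝ) (E : Set (Set (Gr F n r))) :
    samP F n r p E = ∑ L : Set (Gr F n r), (if L ∈ E then W p L else 0) := by
  classical
  unfold samP
  rw [finsum_mem_eq_finite_toFinset_sum _ (Set.toFinite E)]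
  rw [← Finset.sum_filter]
  apply Finset.sum_congr
  · ext L
    simp only [Set.Finite.mem_toFinset, Finset.mem_filter, Finset.mem_univ, true_and]
  · intro L _
    rfl

lemma samP_mono {n r : ℕ} {p : ℝ} (hp0 : 0 ≤ p) (hp1 : p ≤ 1)
    {E E' : Set (Set (Gr F n r))} (h : E ⊆ E') : samP F n r p E ≤ samP F n r p E' := by
  rw [samP_eq, samP_eq]
  apply Finset.sum_le_sum
  intro L _
  by_cases hL : L ∈ E
  · rw [if_pos hL, if_pos (h hL)]
  · rw [if_neg hL]
    by_cases hL' : L ∈ E'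
    · rw [if_pos hL']; exact W_nonneg hp0 hp1 L
    · rw [if_neg hL']

lemma samP_compl {n r : ℕ} (p : ℝ) (E : Set (Set (Gr F n r))) :
    samP F n r p E + samP F n r p Eᶜ = 1 := by
  rw [samP_eq, samP_eq, ← Finset.sum_add_distrib]
  rw [← sum_W_one (α := Gr F n r) (p := p)]
  apply Finset.sum_congr rfl
  intro L _
  by_cases hL : L ∈ E
  · rw [if_pos hL, if_neg (fun h => h hL), add_zero]
  · rw [if_neg hL, if_pos ((Set.mem_compl_iff E L).2 hL), zero_add]

lemma samP_cheb {n r : ℕ} {p : ℝ} (hp0 : 0 < p) (hp1 : p ≤ 1)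
    (hN : 0 < (Fintype.card (Gr F n r) : ℝ)) :
    samP F n r p {L | 2 * p * (Fintype.card (Gr F n r) : ℝ) < (L.ncard : ℝ)}
      ≤ 1 / (p * (Fintype.card (Gr F n r) : ℝ)) := by
  rw [samP_eq]
  refine le_trans (le_of_eq ?_) (chebyshev hp0 hp1 hN)
  apply Finset.sum_congr rfl
  intro L _
  rfl


end GSB

/-- **Proposition 4.6 (greedy sparse basis)**: there are `C, c > 0` depending only on `q,s`
such that for `q^{-cn} ≤ p ≤ c` and any `Δ ≥ 1`, whp `L ~ Sam(Gr_q(n,r), p)` admits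
`𝒮 ⊆ Gr_q(n,s)[L]` and `B ⊆ Gr_q(n,r−1)` satisfying (P1) and (P2). -/
theorem greedy_sparse_basis (q s r : ℕ) (hq : IsPrimePow q) (hr : 1 ≤ r) (hrs : r < s) :
    ∃ C c : ℝ, 0 < c ∧
      ∀ (F : Type) [Field F] [Fintype F], Fintype.card F = q →
        ∀ Δ : ℕ, 1 ≤ Δ → ∀ ε : ℝ, 0 < ε →
          ∃ n₀ : ℕ, ∀ n : ℕ, n₀ ≤ n →
            ∀ p : ℝ, (q : ℝ) ^ (-(c * (n : ℝ))) ≤ p → p ≤ c →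
              1 - ε ≤ samP F n r p
                {L | ∃ (𝒮 : Set (Gr F n s)) (B : Set (Gr F n (r - 1))),
                  propP1 F n s r p L 𝒮 ∧ propP2 F n s r C Δ p L 𝒮 B} := by
  classical
  have hq2 : 2 ≤ q := hq.two_le
  refine ⟨4 * (q:ℝ)^(s*s), 1/4, by norm_num, ?_⟩
  intro F _ _ hcard Δ hΔ ε hε
  obtain ⟨n₁, hn₁⟩ := pow_unbounded_of_one_lt (ε⁻¹) (one_lt_two (α := ℝ))
  refine ⟨4*s + 4*n₁ + 8, ?_⟩
  intro n hn p hplow hphigh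
  rw [← hcard] at hplow ⊢
  set qR : ℝ := (Fintype.card F : ℝ) with hqR
  have hq2R : (2:ℝ) ≤ qR := by rw [hqR, hcard]; exact_mod_cast hq2
  have hq0R : (0:ℝ) < qR := by linarith
  have hp0 : 0 < p := lt_of_lt_of_le (Real.rpow_pos_of_pos hq0R _) hplow
  have hple1 : p ≤ 1 := by linarith
  have hrn : r ≤ n := by omega
  have hsn : s ≤ n := by omega
  -- D ≥ 2
  have hD2 : (2:ℝ) ≤ p ^ ((1:ℝ)/2) * qR ^ n := by
    calc (2:ℝ) = 2 ^ (1:ℝ) := (Real.rpow_one 2).symm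
      _ ≤ 2 ^ ((7/8) * (n:ℝ)) := by
          apply Real.rpow_le_rpow_of_exponent_le one_le_two
          have : (2:ℝ) ≤ (n:ℝ) := by
            have : (2:ℕ) ≤ n := by omega
            exact_mod_cast this
          linarith
      _ ≤ qR ^ ((7/8) * (n:ℝ)) := Real.rpow_le_rpow (by norm_num) hq2R (by positivity)
      _ = qR ^ (-(1/8 * (n:ℝ))) * qR ^ ((n:ℝ)) := by
          rw [← Real.rpow_add hq0R]
          congr 1
          ring
      _ ≤ p ^ ((1:ℝ)/2) * qR ^ ((n:ℝ)) := by
          apply mul_le_mul_of_nonneg_right _ (Real.rpow_nonneg hq0R.le _)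
          calc qR ^ (-(1/8 * (n:ℝ))) = (qR ^ (-(1/4 * (n:ℝ)))) ^ ((1:ℝ)/2) := by
                rw [← Real.rpow_mul hq0R.le]
                congr 1
                ring
            _ ≤ p ^ ((1:ℝ)/2) :=
                Real.rpow_le_rpow (Real.rpow_nonneg hq0R.le _) hplow (by norm_num)
      _ = p ^ ((1:ℝ)/2) * qR ^ n := by rw [Real.rpow_natCast]
  -- probability facts
  set NR : ℝ := (Nat.card (Gr F n r) : ℝ) with hNR
  have hNlow : qR ^ ((r * (n - r) : ℕ)) ≤ NR := by
    rw [hNR, hqR]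
    exact_mod_cast GSB.card_gr_ge (F := F) hrn
  have hN0 : (0:ℝ) < NR := lt_of_lt_of_le (by positivity) hNlow
  have hexp : (n₁:ℝ) ≤ ((r*(n-r):ℕ):ℝ) - 1/4 * (n:ℝ) := by
    have h1 : (n - s : ℕ) ≤ r * (n - r) := by
      have a : n - s ≤ n - r := by omega
      have b : n - r ≤ r * (n - r) := Nat.le_mul_of_pos_left _ (by omega)
      omega
    have h2 : ((n - s : ℕ):ℝ) = (n:ℝ) - (s:ℝ) := by
      rw [Nat.cast_sub hsn]
    have h3 : ((n - s:ℕ):ℝ) ≤ ((r*(n-r):ℕ):ℝ) := by exact_mod_cast h1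
    have h4 : (4*s + 4*n₁ + 8 : ℝ) ≤ (n:ℝ) := by exact_mod_cast hn
    linarith
  have hpN : (2:ℝ)^(n₁:ℕ) ≤ p * NR := by
    have e1 : qR ^ (-(1/4 * (n:ℝ))) * qR ^ (((r*(n-r):ℕ)):ℝ) ≤ p * NR := by
      apply mul_le_mul hplow _ (by positivity) hp0.le
      rw [Real.rpow_natCast]
      exact hNlow
    have e2 : qR ^ (-(1/4 * (n:ℝ))) * qR ^ (((r*(n-r):ℕ)):ℝ)
        = qR ^ ((((r*(n-r):ℕ)):ℝ) - 1/4 * (n:ℝ)) := by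
      rw [← Real.rpow_add hq0R]
      congr 1
      ring
    have e3 : (2:ℝ) ^ ((n₁:ℕ):ℝ) ≤ qR ^ ((((r*(n-r):ℕ)):ℝ) - 1/4 * (n:ℝ)) := by
      calc (2:ℝ)^((n₁:ℕ):ℝ) ≤ (2:ℝ)^((((r*(n-r):ℕ)):ℝ) - 1/4*(n:ℝ)) :=
            Real.rpow_le_rpow_of_exponent_le one_le_two hexp
        _ ≤ qR ^ ((((r*(n-r):ℕ)):ℝ) - 1/4*(n:ℝ)) := by
            apply Real.rpow_le_rpow (by norm_num) hq2R
            linarith [hexp, Nat.cast_nonneg (α := ℝ) n₁]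
    rw [← Real.rpow_natCast (2:ℝ) n₁]
    calc (2:ℝ) ^ ((n₁:ℕ):ℝ) ≤ qR ^ ((((r*(n-r):ℕ)):ℝ) - 1/4 * (n:ℝ)) := e3
      _ = qR ^ (-(1/4 * (n:ℝ))) * qR ^ (((r*(n-r):ℕ)):ℝ) := e2.symm
      _ ≤ p * NR := e1
  have hprob : 1 / (p * NR) ≤ ε := by
    rw [div_le_iff₀ (by positivity)]
    have h2 : ε⁻¹ < p * NR := lt_of_lt_of_le hn₁ hpN
    calc (1:ℝ) = ε * ε⁻¹ := (mul_inv_cancel₀ hε.ne').symm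
      _ ≤ ε * (p*NR) := mul_le_mul_of_nonneg_left h2.le hε.le
  -- the event
  set E : Set (Set (Gr F n r)) := {L | (L.ncard:ℝ) ≤ 2 * p * NR} with hE
  have hEsub : E ⊆ {L | ∃ (𝒮 : Set (Gr F n s)) (B : Set (Gr F n (r - 1))),
      propP1 F n s r p L 𝒮 ∧
      propP2 F n s r (4 * (Fintype.card F : ℝ)^(s*s)) Δ p L 𝒮 B} := by
    intro L hL
    have hL2 : (L.ncard : ℝ) ≤ 2 * p * ((Fintype.card F:ℝ) ^ (n*r)) := by
      refine le_trans hL ?_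
      have hle : NR ≤ qR ^ (n*r) := by
        rw [hNR, hqR]
        exact_mod_cast GSB.card_gr_le (F := F) (n := n) (k := r)
      have : 0 ≤ 2 * p := by linarith
      calc 2 * p * NR ≤ 2 * p * (qR ^ (n*r)) := mul_le_mul_of_nonneg_left hle this
        _ = 2 * p * ((Fintype.card F:ℝ) ^ (n*r)) := by rw [hqR]
    exact GSB.core hr hrs Δ hΔ p hp0 hple1 hD2 L hL2
  have hcompl : samP F n r p Eᶜ ≤ 1/(p*NR) := by
    have hceq : Eᶜ = {L : Set (Gr F n r) |
        2*p*(Fintype.card (Gr F n r):ℝ) < (L.ncard:ℝ)} := by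
      ext L
      simp only [hE, Set.mem_compl_iff, Set.mem_setOf_eq, not_le, hNR,
        Nat.card_eq_fintype_card]
    rw [hceq]
    have hN0' : (0:ℝ) < (Fintype.card (Gr F n r) : ℝ) := by
      rwa [hNR, Nat.card_eq_fintype_card] at hN0
    refine le_trans (GSB.samP_cheb hp0 hple1 hN0') ?_
    rw [hNR, Nat.card_eq_fintype_card]
  calc 1 - ε ≤ 1 - samP F n r p Eᶜ := by linarith [le_trans hcompl hprob]
    _ = samP F n r p E := by linarith [GSB.samP_compl (F := F) p E]
    _ ≤ _ := GSB.samP_mono hp0.le hple1 hEsub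
end
end

section
/- Fix a prime power q and integers s > r ≥ 1. There exists a function f : {0,1,…,r} → Q, depending only on q, s and r, such that for every n ≥ r+s, every (r+s)-dimensional F_q-subspace T of F_q^n, and every r-dimensional subspace R ≤ T, one has e_R = Σ_S f(dim(S ∩ R))·∂_{s,r}e_S as vectors in Q^{Gr_q(n,r)}, where the sum ranges over all s-dimensional subspaces S ≤ T. -/
open scoped Classical

noncomputable section

set_option linter.unusedSectionVars false

variable {F : Type} [Field F] {m : ℕ}

/-- Span of standard basis vectors indexed by `I`. -/
def stdSpan (F : Type) [Field F] {m : ℕ} (I : Finset (Fin m)) : Submodule F (Fin m → F) :=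
  Submodule.span F ((fun i => Pi.single i (1:F)) '' I)

lemma mem_stdSpan_iff {I : Finset (Fin m)} {x : Fin m → F} :
    x ∈ stdSpan F I ↔ ∀ i ∉ I, x i = 0 := by
  constructor
  · intro hx
    refine Submodule.span_induction ?_ ?_ ?_ ?_ hx
    · rintro y ⟨i, hi, rfl⟩ j hj
      exact Pi.single_eq_of_ne (by rintro rfl; exact hj hi) 1
    · intro i _; rfl
    · intro y z _ _ hy hz i hi; simp [hy i hi, hz i hi]
    · intro a y _ hy i hi; simp [hy i hi]
  · intro h
    have : x = ∑ i ∈ I, x i • (Pi.single i 1 : Fin m → F) := by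
      funext j
      rw [Finset.sum_apply]
      by_cases hj : j ∈ I
      · rw [Finset.sum_eq_single j]
        · simp
        · intro b _ hb; simp [Pi.single_eq_of_ne (Ne.symm hb)]
        · intro h'; exact absurd hj h'
      · rw [h j hj, Finset.sum_eq_zero]
        intro b hb
        have : b ≠ j := by rintro rfl; exact hj hb
        simp [Pi.single_eq_of_ne (Ne.symm this)]
    rw [this]
    exact Submodule.sum_mem _ fun i hi => Submodule.smul_mem _ _
      (Submodule.subset_span ⟨i, hi, rfl⟩)

lemma stdSpan_inf (I J : Finset (Fin m)) :
    stdSpan F I ⊓ stdSpan F J = stdSpan F (I ∩ J) := by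
  ext x
  simp only [Submodule.mem_inf, mem_stdSpan_iff, Finset.mem_inter]
  constructor
  · rintro ⟨h1, h2⟩ i hi
    by_cases hI : i ∈ I
    · exact h2 i fun h => hi ⟨hI, h⟩
    · exact h1 i hI
  · intro h
    exact ⟨fun i hi => h i fun ⟨h1, _⟩ => hi h1, fun i hi => h i fun ⟨_, h2⟩ => hi h2⟩

lemma finrank_stdSpan (I : Finset (Fin m)) :
    Module.finrank F (stdSpan F I) = I.card := by
  classical
  have hinj : Function.Injective (fun i : Fin m => Pi.single i (1:F)) := by
    intro a b hab
    by_contra hne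
    have h := congrFun hab a
    simp only [Pi.single_eq_same, Pi.single_eq_of_ne hne] at h
    exact one_ne_zero h
  have hli : LinearIndependent F (fun i : (I : Set (Fin m)) => (Pi.single (i : Fin m) 1 : Fin m → F)) := by
    have := (Pi.basisFun F (Fin m)).linearIndependent
    have h2 : LinearIndependent F (fun i : (I : Set (Fin m)) => (Pi.basisFun F (Fin m)) (i : Fin m)) :=
      this.comp _ Subtype.val_injective
    simpa using h2
  have := finrank_span_set_eq_card (s := (fun i => Pi.single i (1:F)) '' (I : Set (Fin m)))
    (by rw [← linearIndepOn_iff_image (R := F) (Set.injOn_of_injective hinj)]; exact hli)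
  rw [stdSpan, this, Set.toFinset_image, Finset.toFinset_coe,
    Finset.card_image_of_injective _ hinj]

open Module Submodule

variable {F : Type} [Field F]

section V
variable {V : Type} [AddCommGroup V] [Module F V] [FiniteDimensional F V]

/-- complement of `p` inside `P`. -/
lemma exists_compl_inside {p P : Submodule F V} (h : p ≤ P) :
    ∃ C : Submodule F V, C ≤ P ∧ p ⊓ C = ⊥ ∧ p ⊔ C = P := by
  obtain ⟨c, hc⟩ := Submodule.exists_isCompl (Submodule.comap P.subtype p)
  refine ⟨Submodule.map P.subtype c, Submodule.map_subtype_le P c, ?_, ?_⟩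
  · have : Submodule.map P.subtype (Submodule.comap P.subtype p) = p := by
      rw [Submodule.map_comap_subtype, inf_of_le_right h]
    rw [← this, ← Submodule.map_inf _ P.injective_subtype, hc.inf_eq_bot, Submodule.map_bot]
  · have : Submodule.map P.subtype (Submodule.comap P.subtype p) = p := by
      rw [Submodule.map_comap_subtype, inf_of_le_right h]
    rw [← this, ← Submodule.map_sup, hc.sup_eq_top, Submodule.map_top, Submodule.range_subtype]

lemma fin_fam (p : Submodule F V) {k : ℕ} (h : Module.finrank F p = k) :
    ∃ v : Fin k → V, LinearIndependent F v ∧ Submodule.span F (Set.range v) = p := by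
  let b := Module.finBasisOfFinrankEq F p h
  refine ⟨fun i => (b i : V), (b.linearIndependent.map' p.subtype p.ker_subtype), ?_⟩
  have : Set.range (fun i => (b i : V)) = p.subtype '' Set.range b := by
    rw [← Set.range_comp]; rfl
  rw [this, ← Submodule.map_span, b.span_eq, Submodule.map_top, Submodule.range_subtype]

end V

variable {V W : Type} [AddCommGroup V] [Module F V] [FiniteDimensional F V]
  [AddCommGroup W] [Module F W] [FiniteDimensional F W]


theorem sup_decomp_top {V : Type} [AddCommGroup V] [Module F V] (A B CA CB D : Submodule F V)
    (hCA_sup : A ⊓ B ⊔ CA = A) (hCB_sup : A ⊓ B ⊔ CB = B) (hD_sup : A ⊔ B ⊔ D = ⊤) :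
    (A ⊓ B) ⊔ (CA ⊔ (CB ⊔ D)) = ⊤ := by
  have h1 : A ≤ (A ⊓ B) ⊔ (CA ⊔ (CB ⊔ D)) :=
    hCA_sup.ge.trans (sup_le_sup_left (le_sup_left : CA ≤ CA ⊔ (CB ⊔ D)) (A ⊓ B))
  have h2 : B ≤ (A ⊓ B) ⊔ (CA ⊔ (CB ⊔ D)) :=
    hCB_sup.ge.trans
      (sup_le_sup_left (le_sup_of_le_right (le_sup_left : CB ≤ CB ⊔ D)) (A ⊓ B))
  have h3 : D ≤ (A ⊓ B) ⊔ (CA ⊔ (CB ⊔ D)) :=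
    le_sup_of_le_right (le_sup_of_le_right (le_sup_right : D ≤ CB ⊔ D))
  apply le_antisymm le_top
  rw [← hD_sup]
  exact sup_le (sup_le h1 h2) h3

set_option maxHeartbeats 1000000 in
theorem exists_equiv_map_eq (A B : Submodule F V) (A' B' : Submodule F W)
    (hV : Module.finrank F V = Module.finrank F W)
    (hA : Module.finrank F A = Module.finrank F A')
    (hB : Module.finrank F B = Module.finrank F B')
    (hAB : Module.finrank F (A ⊓ B : Submodule F V) = Module.finrank F (A' ⊓ B' : Submodule F W)) :
    ∃ e : V ≃ₗ[F] W, Submodule.map (e : V →ₗ[F] W) A = A' ∧ Submodule.map (e : V →ₗ[F] W) B = B' := by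
  -- complements
  obtain ⟨CA, hCA_le, hCA_bot, hCA_sup⟩ := exists_compl_inside (inf_le_left : A ⊓ B ≤ A)
  obtain ⟨CB, hCB_le, hCB_bot, hCB_sup⟩ := exists_compl_inside (inf_le_right : A ⊓ B ≤ B)
  obtain ⟨D, hD_le, hD_bot, hD_sup⟩ := exists_compl_inside (le_top : A ⊔ B ≤ ⊤)
  obtain ⟨CA', hCA'_le, hCA'_bot, hCA'_sup⟩ := exists_compl_inside (inf_le_left : A' ⊓ B' ≤ A')
  obtain ⟨CB', hCB'_le, hCB'_bot, hCB'_sup⟩ := exists_compl_inside (inf_le_right : A' ⊓ B' ≤ B')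
  obtain ⟨D', hD'_le, hD'_bot, hD'_sup⟩ := exists_compl_inside (le_top : A' ⊔ B' ≤ ⊤)
  have htopV : (A ⊓ B) ⊔ (CA ⊔ (CB ⊔ D)) = ⊤ :=
    sup_decomp_top A B CA CB D hCA_sup hCB_sup hD_sup
  have htopW : (A' ⊓ B') ⊔ (CA' ⊔ (CB' ⊔ D')) = ⊤ :=
    sup_decomp_top A' B' CA' CB' D' hCA'_sup hCB'_sup hD'_sup
  -- dimension bookkeeping
  set w := Module.finrank F (A ⊓ B : Submodule F V) with hw
  have hrkCA : Module.finrank F A = w + Module.finrank F CA := by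
    have h := Submodule.finrank_sup_add_finrank_inf_eq (A ⊓ B) CA
    rw [hCA_sup, hCA_bot] at h; simp only [finrank_bot] at h; omega
  have hrkCB : Module.finrank F B = w + Module.finrank F CB := by
    have h := Submodule.finrank_sup_add_finrank_inf_eq (A ⊓ B) CB
    rw [hCB_sup, hCB_bot] at h; simp only [finrank_bot] at h; omega
  have hrkD : Module.finrank F V = Module.finrank F (A ⊔ B : Submodule F V) + Module.finrank F D := by
    have h := Submodule.finrank_sup_add_finrank_inf_eq (A ⊔ B) D
    rw [hD_sup, hD_bot] at h; simp only [finrank_bot, finrank_top] at h; omega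
  have hrkAB : Module.finrank F (A ⊔ B : Submodule F V) + w
      = Module.finrank F A + Module.finrank F B :=
    Submodule.finrank_sup_add_finrank_inf_eq A B
  have hrkCA' : Module.finrank F A' = w + Module.finrank F CA' := by
    have h := Submodule.finrank_sup_add_finrank_inf_eq (A' ⊓ B') CA'
    rw [hCA'_sup, hCA'_bot] at h; simp only [finrank_bot] at h; omega
  have hrkCB' : Module.finrank F B' = w + Module.finrank F CB' := by
    have h := Submodule.finrank_sup_add_finrank_inf_eq (A' ⊓ B') CB'
    rw [hCB'_sup, hCB'_bot] at h; simp only [finrank_bot] at h; omega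
  have hrkD' : Module.finrank F W = Module.finrank F (A' ⊔ B' : Submodule F W) + Module.finrank F D' := by
    have h := Submodule.finrank_sup_add_finrank_inf_eq (A' ⊔ B') D'
    rw [hD'_sup, hD'_bot] at h; simp only [finrank_bot, finrank_top] at h; omega
  have hrkAB' : Module.finrank F (A' ⊔ B' : Submodule F W) + Module.finrank F (A' ⊓ B' : Submodule F W)
      = Module.finrank F A' + Module.finrank F B' :=
    Submodule.finrank_sup_add_finrank_inf_eq A' B'
  have eCA : Module.finrank F CA' = Module.finrank F CA := by omega
  have eCB : Module.finrank F CB' = Module.finrank F CB := by omega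
  have eD : Module.finrank F D' = Module.finrank F D := by omega
  -- families
  obtain ⟨v1, hv1i, hv1s⟩ := fin_fam (A ⊓ B) (rfl : Module.finrank F (A ⊓ B : Submodule F V) = w)
  obtain ⟨v2, hv2i, hv2s⟩ := fin_fam CA (rfl : Module.finrank F CA = _)
  obtain ⟨v3, hv3i, hv3s⟩ := fin_fam CB (rfl : Module.finrank F CB = _)
  obtain ⟨v4, hv4i, hv4s⟩ := fin_fam D (rfl : Module.finrank F D = _)
  obtain ⟨u1, hu1i, hu1s⟩ := fin_fam (A' ⊓ B') hAB.symm
  obtain ⟨u2, hu2i, hu2s⟩ := fin_fam CA' eCA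
  obtain ⟨u3, hu3i, hu3s⟩ := fin_fam CB' eCB
  obtain ⟨u4, hu4i, hu4s⟩ := fin_fam D' eD
  -- disjointness (V side)
  have dis34 : Disjoint CB D := by
    rw [disjoint_iff, eq_bot_iff, ← hD_bot]
    exact inf_le_inf_right D (hCB_le.trans le_sup_right)
  have dis2 : Disjoint CA (CB ⊔ D) := by
    rw [Submodule.disjoint_def]
    intro x hxCA hx
    rcases Submodule.mem_sup.mp hx with ⟨y, hy, z, hz, rfl⟩
    have hzz : z ∈ (A ⊔ B) ⊓ D := by
      constructor
      · have : y + z - y ∈ A ⊔ B := by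
          exact sub_mem (le_sup_left (a := A) (b := B) (hCA_le hxCA))
            (le_sup_right (a := A) (b := B) (hCB_le hy))
        simpa using this
      · exact hz
    rw [hD_bot, Submodule.mem_bot] at hzz
    subst hzz
    have hxAB : y + 0 ∈ (A ⊓ B) ⊓ CB := by
      refine ⟨⟨?_, ?_⟩, by simpa using hy⟩
      · exact hCA_le hxCA
      · simpa using hCB_le hy
    rw [hCB_bot, Submodule.mem_bot] at hxAB
    simpa using hxAB
  have dis1 : Disjoint (A ⊓ B) (CA ⊔ (CB ⊔ D)) := by
    rw [Submodule.disjoint_def]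
    intro x hxAB hx
    rcases Submodule.mem_sup.mp hx with ⟨y, hy, w', hw', rfl⟩
    rcases Submodule.mem_sup.mp hw' with ⟨z, hz, t, ht, rfl⟩
    have hxA : y + (z + t) ∈ A := hxAB.1
    have hxB : y + (z + t) ∈ B := hxAB.2
    have htt : t ∈ (A ⊔ B) ⊓ D := by
      constructor
      · have : (y + (z + t)) - y - z ∈ A ⊔ B :=
          sub_mem (sub_mem (le_sup_left (a := A) (b := B) hxA)
            (le_sup_left (a := A) (b := B) (hCA_le hy)))
            (le_sup_right (a := A) (b := B) (hCB_le hz))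
        simpa using this
      · exact ht
    rw [hD_bot, Submodule.mem_bot] at htt
    subst htt
    have hyy : y ∈ (A ⊓ B) ⊓ CA := by
      refine ⟨⟨?_, ?_⟩, hy⟩
      · exact hCA_le hy
      · have : (y + (z + 0)) - z ∈ B := sub_mem hxB (hCB_le hz)
        simpa using this
    rw [hCA_bot, Submodule.mem_bot] at hyy
    subst hyy
    have hzz : z ∈ (A ⊓ B) ⊓ CB := by
      refine ⟨⟨?_, ?_⟩, hz⟩
      · have : (0 + (z + 0)) - 0 ∈ A := sub_mem hxA (Submodule.zero_mem A)
        simpa using this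
      · have : (0 + (z + 0)) - 0 ∈ B := sub_mem hxB (Submodule.zero_mem B)
        simpa using this
    rw [hCB_bot, Submodule.mem_bot] at hzz
    subst hzz
    simp
  -- disjointness (W side)
  have dis34' : Disjoint CB' D' := by
    rw [disjoint_iff, eq_bot_iff, ← hD'_bot]
    exact inf_le_inf_right D' (hCB'_le.trans le_sup_right)
  have dis2' : Disjoint CA' (CB' ⊔ D') := by
    rw [Submodule.disjoint_def]
    intro x hxCA hx
    rcases Submodule.mem_sup.mp hx with ⟨y, hy, z, hz, rfl⟩
    have hzz : z ∈ (A' ⊔ B') ⊓ D' := by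
      constructor
      · have : y + z - y ∈ A' ⊔ B' := by
          exact sub_mem (le_sup_left (a := A') (b := B') (hCA'_le hxCA))
            (le_sup_right (a := A') (b := B') (hCB'_le hy))
        simpa using this
      · exact hz
    rw [hD'_bot, Submodule.mem_bot] at hzz
    subst hzz
    have hxAB : y + 0 ∈ (A' ⊓ B') ⊓ CB' := by
      refine ⟨⟨?_, ?_⟩, by simpa using hy⟩
      · exact hCA'_le hxCA
      · simpa using hCB'_le hy
    rw [hCB'_bot, Submodule.mem_bot] at hxAB
    simpa using hxAB
  have dis1' : Disjoint (A' ⊓ B') (CA' ⊔ (CB' ⊔ D')) := by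
    rw [Submodule.disjoint_def]
    intro x hxAB hx
    rcases Submodule.mem_sup.mp hx with ⟨y, hy, w', hw', rfl⟩
    rcases Submodule.mem_sup.mp hw' with ⟨z, hz, t, ht, rfl⟩
    have hxA : y + (z + t) ∈ A' := hxAB.1
    have hxB : y + (z + t) ∈ B' := hxAB.2
    have htt : t ∈ (A' ⊔ B') ⊓ D' := by
      constructor
      · have : (y + (z + t)) - y - z ∈ A' ⊔ B' :=
          sub_mem (sub_mem (le_sup_left (a := A') (b := B') hxA)
            (le_sup_left (a := A') (b := B') (hCA'_le hy)))
            (le_sup_right (a := A') (b := B') (hCB'_le hz))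
        simpa using this
      · exact ht
    rw [hD'_bot, Submodule.mem_bot] at htt
    subst htt
    have hyy : y ∈ (A' ⊓ B') ⊓ CA' := by
      refine ⟨⟨?_, ?_⟩, hy⟩
      · exact hCA'_le hy
      · have : (y + (z + 0)) - z ∈ B' := sub_mem hxB (hCB'_le hz)
        simpa using this
    rw [hCA'_bot, Submodule.mem_bot] at hyy
    subst hyy
    have hzz : z ∈ (A' ⊓ B') ⊓ CB' := by
      refine ⟨⟨?_, ?_⟩, hz⟩
      · have : (0 + (z + 0)) - 0 ∈ A' := sub_mem hxA (Submodule.zero_mem A')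
        simpa using this
      · have : (0 + (z + 0)) - 0 ∈ B' := sub_mem hxB (Submodule.zero_mem B')
        simpa using this
    rw [hCB'_bot, Submodule.mem_bot] at hzz
    subst hzz
    simp
  -- bases
  set uV : (Fin w ⊕ (Fin (Module.finrank F CA) ⊕ (Fin (Module.finrank F CB) ⊕ Fin (Module.finrank F D)))) → V :=
    Sum.elim v1 (Sum.elim v2 (Sum.elim v3 v4)) with huV
  set uW : (Fin w ⊕ (Fin (Module.finrank F CA) ⊕ (Fin (Module.finrank F CB) ⊕ Fin (Module.finrank F D)))) → W :=
    Sum.elim u1 (Sum.elim u2 (Sum.elim u3 u4)) with huW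
  have hsp34 : Submodule.span F (Set.range (Sum.elim v3 v4)) = CB ⊔ D := by
    rw [Set.Sum.elim_range _ _, Submodule.span_union, hv3s, hv4s]
  have hsp234 : Submodule.span F (Set.range (Sum.elim v2 (Sum.elim v3 v4))) = CA ⊔ (CB ⊔ D) := by
    rw [Set.Sum.elim_range _ _, Submodule.span_union, hv2s, hsp34]
  have hspV : Submodule.span F (Set.range uV) = (A ⊓ B) ⊔ (CA ⊔ (CB ⊔ D)) := by
    rw [huV, Set.Sum.elim_range _ _, Submodule.span_union, hv1s, hsp234]
  have hsp34' : Submodule.span F (Set.range (Sum.elim u3 u4)) = CB' ⊔ D' := by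
    rw [Set.Sum.elim_range _ _, Submodule.span_union, hu3s, hu4s]
  have hsp234' : Submodule.span F (Set.range (Sum.elim u2 (Sum.elim u3 u4))) = CA' ⊔ (CB' ⊔ D') := by
    rw [Set.Sum.elim_range _ _, Submodule.span_union, hu2s, hsp34']
  have hspW : Submodule.span F (Set.range uW) = (A' ⊓ B') ⊔ (CA' ⊔ (CB' ⊔ D')) := by
    rw [huW, Set.Sum.elim_range _ _, Submodule.span_union, hu1s, hsp234']
  have indV : LinearIndependent F uV := by
    refine (hv1i.sum_type (hv2i.sum_type (hv3i.sum_type hv4i ?_) ?_) ?_)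
    · rw [hv3s, hv4s]; exact dis34
    · rw [hv2s, hsp34]; exact dis2
    · rw [hv1s, hsp234]; exact dis1
  have indW : LinearIndependent F uW := by
    refine (hu1i.sum_type (hu2i.sum_type (hu3i.sum_type hu4i ?_) ?_) ?_)
    · rw [hu3s, hu4s]; exact dis34'
    · rw [hu2s, hsp34']; exact dis2'
    · rw [hu1s, hsp234']; exact dis1'
  let bV : Basis _ F V := Basis.mk indV (by rw [hspV, htopV])
  let bW : Basis _ F W := Basis.mk indW (by rw [hspW, htopW])
  let e : V ≃ₗ[F] W := bV.equiv bW (Equiv.refl _)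
  have he : ∀ k, e (uV k) = uW k := by
    intro k
    have h1 : bV k = uV k := Basis.mk_apply indV _ k
    have h2 : bW k = uW k := Basis.mk_apply indW _ k
    rw [← h1, ← h2]
    exact bV.equiv_apply k bW (Equiv.refl _)
  refine ⟨e, ?_, ?_⟩
  · have hAeq : A = Submodule.span F (Set.range v1 ∪ Set.range v2) := by
      rw [Submodule.span_union, hv1s, hv2s, hCA_sup]
    have hAeq' : A' = Submodule.span F (Set.range u1 ∪ Set.range u2) := by
      rw [Submodule.span_union, hu1s, hu2s, hCA'_sup]
    have hev1 : ⇑e ∘ v1 = u1 := funext fun i => he (Sum.inl i)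
    have hev2 : ⇑e ∘ v2 = u2 := funext fun i => he (Sum.inr (Sum.inl i))
    have im1 : ⇑e '' Set.range v1 = Set.range u1 := by rw [← Set.range_comp, hev1]
    have im2 : ⇑e '' Set.range v2 = Set.range u2 := by rw [← Set.range_comp, hev2]
    rw [hAeq, hAeq', Submodule.map_span, Set.image_union, LinearEquiv.coe_coe, im1, im2]
  · have hBeq : B = Submodule.span F (Set.range v1 ∪ Set.range v3) := by
      rw [Submodule.span_union, hv1s, hv3s, hCB_sup]
    have hBeq' : B' = Submodule.span F (Set.range u1 ∪ Set.range u3) := by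
      rw [Submodule.span_union, hu1s, hu3s, hCB'_sup]
    have hev1 : ⇑e ∘ v1 = u1 := funext fun i => he (Sum.inl i)
    have hev3 : ⇑e ∘ v3 = u3 := funext fun i => he (Sum.inr (Sum.inr (Sum.inl i)))
    have im1 : ⇑e '' Set.range v1 = Set.range u1 := by rw [← Set.range_comp, hev1]
    have im3 : ⇑e '' Set.range v3 = Set.range u3 := by rw [← Set.range_comp, hev3]
    rw [hBeq, hBeq', Submodule.map_span, Set.image_union, LinearEquiv.coe_coe, im1, im3]

lemma finrank_comap_subtype {V : Type} [AddCommGroup V] [Module F V]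
    {p q : Submodule F V} (h : q ≤ p) :
    Module.finrank F (Submodule.comap p.subtype q) = Module.finrank F q := by
  have := Submodule.finrank_map_subtype_eq p (Submodule.comap p.subtype q)
  rw [Submodule.map_comap_subtype, inf_of_le_right h] at this
  exact this.symm

lemma map_equiv_toLinearMap {V W : Type} [AddCommGroup V] [Module F V]
    [AddCommGroup W] [Module F W] (e : V ≃ₗ[F] W) (p : Submodule F V) :
    Submodule.map (e : V →ₗ[F] W) p = Submodule.map e.toLinearMap p := rfl

theorem count_transport {V V' : Type} [AddCommGroup V] [Module F V] [FiniteDimensional F V]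
    [AddCommGroup V'] [Module F V'] [FiniteDimensional F V']
    (T R R' : Submodule F V) (T' R2 R2' : Submodule F V')
    (hR : R ≤ T) (hR' : R' ≤ T) (hR2 : R2 ≤ T') (hR2' : R2' ≤ T')
    (h1 : Module.finrank F T = Module.finrank F T')
    (h2 : Module.finrank F R = Module.finrank F R2)
    (h3 : Module.finrank F R' = Module.finrank F R2')
    (h4 : Module.finrank F (R ⊓ R' : Submodule F V)
        = Module.finrank F (R2 ⊓ R2' : Submodule F V'))
    (s i : ℕ) :
    Nat.card {S : Submodule F V //
        S ≤ T ∧ R' ≤ S ∧ Module.finrank F S = s ∧ Module.finrank F (S ⊓ R : Submodule F V) = i}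
      = Nat.card {S : Submodule F V' //
        S ≤ T' ∧ R2' ≤ S ∧ Module.finrank F S = s
          ∧ Module.finrank F (S ⊓ R2 : Submodule F V') = i} := by
  obtain ⟨e, heA, heB⟩ := exists_equiv_map_eq (Submodule.comap T.subtype R)
    (Submodule.comap T.subtype R') (Submodule.comap T'.subtype R2) (Submodule.comap T'.subtype R2')
    h1
    (by rw [finrank_comap_subtype hR, finrank_comap_subtype hR2]; exact h2)
    (by rw [finrank_comap_subtype hR', finrank_comap_subtype hR2']; exact h3)
    (by rw [← Submodule.comap_inf, ← Submodule.comap_inf,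
          finrank_comap_subtype (le_trans inf_le_left hR),
          finrank_comap_subtype (le_trans inf_le_left hR2)]; exact h4)
  rw [map_equiv_toLinearMap] at heA heB
  -- the forward and backward maps on submodules
  set φ : Submodule F V → Submodule F V' :=
    fun S => Submodule.map T'.subtype (Submodule.map e.toLinearMap (Submodule.comap T.subtype S)) with hφ
  set ψ : Submodule F V' → Submodule F V :=
    fun S => Submodule.map T.subtype (Submodule.map e.symm.toLinearMap (Submodule.comap T'.subtype S)) with hψ
  have unmapT' : ∀ X : Submodule F T', Submodule.comap T'.subtype (Submodule.map T'.subtype X) = X := by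
    intro X
    rw [Submodule.comap_map_eq, Submodule.ker_subtype, sup_bot_eq]
  have unmapT : ∀ X : Submodule F T, Submodule.comap T.subtype (Submodule.map T.subtype X) = X := by
    intro X
    rw [Submodule.comap_map_eq, Submodule.ker_subtype, sup_bot_eq]
  have unmape : ∀ X : Submodule F T,
      Submodule.map e.symm.toLinearMap (Submodule.map e.toLinearMap X) = X := by
    intro X
    ext x
    simp only [Submodule.mem_map]
    constructor
    · rintro ⟨y, ⟨z, hz, rfl⟩, rfl⟩; simpa using hz
    · intro hx; exact ⟨e x, ⟨x, hx, rfl⟩, by simp⟩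
  have unmape' : ∀ X : Submodule F T',
      Submodule.map e.toLinearMap (Submodule.map e.symm.toLinearMap X) = X := by
    intro X
    ext x
    simp only [Submodule.mem_map]
    constructor
    · rintro ⟨y, ⟨z, hz, rfl⟩, rfl⟩; simpa using hz
    · intro hx; exact ⟨e.symm x, ⟨x, hx, rfl⟩, by simp⟩
  have hψφ : ∀ S : Submodule F V, S ≤ T → ψ (φ S) = S := by
    intro S hS
    rw [hφ, hψ]
    simp only
    rw [unmapT', unmape, Submodule.map_comap_subtype, inf_of_le_right hS]
  have hφψ : ∀ S : Submodule F V', S ≤ T' → φ (ψ S) = S := by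
    intro S hS
    rw [hφ, hψ]
    simp only
    rw [unmapT, unmape', Submodule.map_comap_subtype, inf_of_le_right hS]
  have hφle : ∀ S, φ S ≤ T' := fun S => Submodule.map_subtype_le _ _
  have hψle : ∀ S, ψ S ≤ T := fun S => Submodule.map_subtype_le _ _
  have hφrk : ∀ S : Submodule F V, S ≤ T → Module.finrank F (φ S) = Module.finrank F S := by
    intro S hS
    rw [hφ]
    simp only
    rw [Submodule.finrank_map_subtype_eq, LinearEquiv.finrank_map_eq, finrank_comap_subtype hS]
  have hψrk : ∀ S : Submodule F V', S ≤ T' → Module.finrank F (ψ S) = Module.finrank F S := by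
    intro S hS
    rw [hψ]
    simp only
    rw [Submodule.finrank_map_subtype_eq, LinearEquiv.finrank_map_eq, finrank_comap_subtype hS]
  have hφmono : ∀ S S' : Submodule F V, S ≤ S' → φ S ≤ φ S' :=
    fun S S' h => Submodule.map_mono (Submodule.map_mono (Submodule.comap_mono h))
  have hψmono : ∀ S S' : Submodule F V', S ≤ S' → ψ S ≤ ψ S' :=
    fun S S' h => Submodule.map_mono (Submodule.map_mono (Submodule.comap_mono h))
  have hφinf : ∀ S S' : Submodule F V, φ (S ⊓ S') = φ S ⊓ φ S' := by
    intro S S'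
    rw [hφ]
    simp only
    rw [Submodule.comap_inf, Submodule.map_inf e.toLinearMap (e.injective : Function.Injective e.toLinearMap),
      Submodule.map_inf _ T'.injective_subtype]
  have hφR : φ R = R2 := by
    rw [hφ]; simp only
    rw [heA, Submodule.map_comap_subtype, inf_of_le_right hR2]
  have hφR' : φ R' = R2' := by
    rw [hφ]; simp only
    rw [heB, Submodule.map_comap_subtype, inf_of_le_right hR2']
  refine Nat.card_eq_of_bijective (fun S => ⟨φ S.1, hφle S.1, ?_, ?_, ?_⟩) ⟨?_, ?_⟩
  · rw [← hφR']; exact hφmono _ _ S.2.2.1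
  · rw [hφrk S.1 S.2.1]; exact S.2.2.2.1
  · rw [← hφR, ← hφinf, hφrk _ (le_trans inf_le_left S.2.1)]
    exact S.2.2.2.2
  · intro S S' h
    have h' : φ S.1 = φ S'.1 := congrArg Subtype.val h
    have : ψ (φ S.1) = ψ (φ S'.1) := by rw [h']
    rw [hψφ _ S.2.1, hψφ _ S'.2.1] at this
    exact Subtype.ext this
  · intro Y
    have hle : ψ Y.1 ⊓ R ≤ T := le_trans inf_le_left (hψle _)
    have hR'ψ : ψ R2' = R' := by rw [← hφR', hψφ _ hR']
    refine ⟨⟨ψ Y.1, hψle _, ?_, ?_, ?_⟩, ?_⟩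
    · rw [← hR'ψ]; exact hψmono _ _ Y.2.2.1
    · rw [hψrk _ Y.2.1]; exact Y.2.2.2.1
    · have hrk : Module.finrank F (φ (ψ Y.1 ⊓ R)) = Module.finrank F (ψ Y.1 ⊓ R : Submodule F V) :=
        hφrk _ hle
      rw [← hrk, hφinf, hφψ _ Y.2.1, hφR]
      exact Y.2.2.2.2
    · exact Subtype.ext (hφψ _ Y.2.1)


/-- Solve the triangular system downward from `r`. -/
noncomputable def solveF (M : ℕ → ℕ → ℕ) (r : ℕ) (j : ℕ) : ℚ :=
  if h : j < r then
    (0 - ∑ i ∈ (Finset.Ioc j r).attach, (M j i.1 : ℚ) * solveF M r i.1) / (M j j)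
  else if j = r then 1 / (M r r) else 0
termination_by r - j
decreasing_by
  have := (Finset.mem_Ioc.mp i.2).1
  omega

theorem solveF_spec (M : ℕ → ℕ → ℕ) (r : ℕ) (hdiag : ∀ j ≤ r, 0 < M j j) :
    ∀ j ≤ r, (∑ i ∈ Finset.Icc j r, (M j i : ℚ) * solveF M r i)
      = if j = r then 1 else 0 := by
  intro j hj
  have hMpos := hdiag j hj
  have hM : (M j j : ℚ) ≠ 0 := by exact_mod_cast hMpos.ne'
  rw [Finset.Icc_eq_cons_Ioc hj, Finset.sum_cons]
  rcases lt_or_eq_of_le hj with h | h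
  · have hfj : solveF M r j
        = (0 - ∑ i ∈ (Finset.Ioc j r).attach, (M j i.1 : ℚ) * solveF M r i.1) / (M j j) := by
      rw [solveF, dif_pos h]
    have hsum : ∑ i ∈ (Finset.Ioc j r).attach, (M j i.1 : ℚ) * solveF M r i.1
        = ∑ i ∈ Finset.Ioc j r, (M j i : ℚ) * solveF M r i :=
      Finset.sum_attach (Finset.Ioc j r) (fun k => (M j k : ℚ) * solveF M r k)
    rw [hfj, hsum, if_neg (by omega : ¬ j = r)]
    field_simp
    ring
  · subst h
    have hfj : solveF M j j = 1 / (M j j) := by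
      rw [solveF]
      simp
    rw [hfj, if_pos rfl, Finset.Ioc_self, Finset.sum_empty, add_zero]
    field_simp

lemma stdSpan_mono {I J : Finset (Fin m)} (h : I ⊆ J) : stdSpan F I ≤ stdSpan F J :=
  Submodule.span_mono (Set.image_mono (Finset.coe_subset.mpr h))

theorem exists_ref_config (F : Type) [Field F] (r s j : ℕ) (hrs : r < s) :
    ∃ R0 R0' S0 : Submodule F (Fin (r+s) → F),
      Module.finrank F R0 = r ∧ Module.finrank F R0' = r ∧
      Module.finrank F (R0 ⊓ R0' : Submodule F (Fin (r+s) → F)) = min j r ∧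
      R0' ≤ S0 ∧ Module.finrank F S0 = s ∧
      Module.finrank F (S0 ⊓ R0 : Submodule F (Fin (r+s) → F)) = min j r := by
  set j' := min j r with hj'
  have hj'r : j' ≤ r := min_le_right _ _
  have hI : ∀ k ∈ Finset.range r, k < r + s := by
    intro k hk; rw [Finset.mem_range] at hk; omega
  have hJ : ∀ k ∈ Finset.range j' ∪ Finset.Ico r (2*r - j'), k < r + s := by
    intro k hk
    simp only [Finset.mem_union, Finset.mem_range, Finset.mem_Ico] at hk
    omega
  have hJK : ∀ k ∈ (Finset.range j' ∪ Finset.Ico r (2*r - j')) ∪ Finset.Ico (2*r - j') (r + s - j'),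
      k < r + s := by
    intro k hk
    simp only [Finset.mem_union, Finset.mem_range, Finset.mem_Ico] at hk
    omega
  refine ⟨stdSpan F (Finset.attachFin (Finset.range r) hI),
    stdSpan F (Finset.attachFin _ hJ), stdSpan F (Finset.attachFin _ hJK), ?_, ?_, ?_, ?_, ?_, ?_⟩
  · rw [finrank_stdSpan, Finset.card_attachFin, Finset.card_range]
  · have hdisj : Disjoint (Finset.range j') (Finset.Ico r (2*r - j')) := by
      rw [Finset.disjoint_left]
      intro a ha hb
      rw [Finset.mem_range] at ha; rw [Finset.mem_Ico] at hb; omega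
    rw [finrank_stdSpan, Finset.card_attachFin, Finset.card_union_of_disjoint hdisj,
      Finset.card_range, Nat.card_Ico]
    omega
  · rw [stdSpan_inf, finrank_stdSpan]
    have : Finset.attachFin (Finset.range r) hI ∩ Finset.attachFin _ hJ
        = Finset.attachFin (Finset.range j') (by intro k hk; rw [Finset.mem_range] at hk; omega) := by
      ext a
      simp only [Finset.mem_inter, Finset.mem_attachFin, Finset.mem_union, Finset.mem_range,
        Finset.mem_Ico]
      omega
    rw [this, Finset.card_attachFin, Finset.card_range]
  · apply stdSpan_mono
    intro a ha
    rw [Finset.mem_attachFin] at ha ⊢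
    exact Finset.mem_union_left _ ha
  · have hdisj1 : Disjoint (Finset.range j' ∪ Finset.Ico r (2*r - j'))
        (Finset.Ico (2*r - j') (r + s - j')) := by
      rw [Finset.disjoint_left]
      intro a ha hb
      simp only [Finset.mem_union, Finset.mem_range, Finset.mem_Ico] at ha hb
      omega
    have hdisj2 : Disjoint (Finset.range j') (Finset.Ico r (2*r - j')) := by
      rw [Finset.disjoint_left]
      intro a ha hb
      rw [Finset.mem_range] at ha; rw [Finset.mem_Ico] at hb; omega
    rw [finrank_stdSpan, Finset.card_attachFin, Finset.card_union_of_disjoint hdisj1,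
      Finset.card_union_of_disjoint hdisj2, Finset.card_range, Nat.card_Ico, Nat.card_Ico]
    omega
  · rw [stdSpan_inf, finrank_stdSpan]
    have : Finset.attachFin _ hJK ∩ Finset.attachFin (Finset.range r) hI
        = Finset.attachFin (Finset.range j') (by intro k hk; rw [Finset.mem_range] at hk; omega) := by
      ext a
      simp only [Finset.mem_inter, Finset.mem_attachFin, Finset.mem_union, Finset.mem_range,
        Finset.mem_Ico]
      omega
    rw [this, Finset.card_attachFin, Finset.card_range]


/-- **Local decodability with symmetric coefficients** (from the proof of Lemma 5.1): there is
`f : {0,…,r} → ℚ` depending only on `q,s,r` such that for every `n ≥ r+s`, every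
`(r+s)`-dimensional subspace `T` of `F^n` and every `r`-dimensional `R ≤ T`,
`e_R = Σ_{S ≤ T, dim S = s} f(dim(S ∩ R)) ∂_{s,r} e_S` in `ℚ^{Gr_q(n,r)}`. -/
theorem local_decodability (q s r : ℕ) (hq : IsPrimePow q) (hr : 1 ≤ r) (hrs : r < s) :
    ∀ (F : Type) [Field F] [Fintype F], Fintype.card F = q →
      ∃ f : ℕ → ℚ,
        ∀ n : ℕ, r + s ≤ n →
          ∀ T : Submodule F (Fin n → F), Module.finrank F T = r + s →
            ∀ R : Submodule F (Fin n → F), R ≤ T → Module.finrank F R = r →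
              ∀ R' : Gr F n r,
                (if R'.1 = R then (1 : ℚ) else 0) =
                  ∑ᶠ S : Gr F n s,
                    if S.1 ≤ T then
                      f (Module.finrank F (S.1 ⊓ R : Submodule F (Fin n → F))) *
                        (if R'.1 ≤ S.1 then 1 else 0)
                    else 0 := by
  intro F _ _ hF
  -- choose reference configurations for every possible intersection dimension
  choose R0 R0' S0 hR0 hR0' hR0R0' hS0le hS0rk hS0inf using
    fun j : ℕ => exists_ref_config F r s j hrs
  haveI : Finite (Submodule F (Fin (r+s) → F)) :=
    Finite.of_injective (fun p => (p : Set (Fin (r+s) → F))) SetLike.coe_injective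
  -- the counting matrix
  set M : ℕ → ℕ → ℕ := fun j i =>
    Nat.card {S : Submodule F (Fin (r+s) → F) //
      S ≤ ⊤ ∧ R0' j ≤ S ∧ Module.finrank F S = s ∧
        Module.finrank F (S ⊓ R0 j : Submodule F (Fin (r+s) → F)) = i} with hM
  have hdiag : ∀ j ≤ r, 0 < M j j := by
    intro j hj
    have hne : Nonempty {S : Submodule F (Fin (r+s) → F) //
        S ≤ ⊤ ∧ R0' j ≤ S ∧ Module.finrank F S = s ∧
          Module.finrank F (S ⊓ R0 j : Submodule F (Fin (r+s) → F)) = j} := by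
      refine ⟨⟨S0 j, le_top, hS0le j, hS0rk j, ?_⟩⟩
      rw [hS0inf j, min_eq_left hj]
    exact Nat.card_pos
  refine ⟨solveF M r, ?_⟩
  intro n hn T hT R hRT hRr R'
  haveI : Finite (Submodule F (Fin n → F)) :=
    Finite.of_injective (fun p => (p : Set (Fin n → F))) SetLike.coe_injective
  haveI : Fintype (Gr F n s) := Fintype.ofFinite _
  rw [finsum_eq_sum_of_fintype]
  have hsummand : ∀ S : Gr F n s,
      (if S.1 ≤ T then
        solveF M r (Module.finrank F (S.1 ⊓ R : Submodule F (Fin n → F))) *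
          (if R'.1 ≤ S.1 then 1 else 0) else 0)
      = if S.1 ≤ T ∧ R'.1 ≤ S.1 then
          solveF M r (Module.finrank F (S.1 ⊓ R : Submodule F (Fin n → F))) else 0 := by
    intro S
    by_cases h1 : S.1 ≤ T <;> by_cases h2 : R'.1 ≤ S.1 <;> simp [h1, h2]
  rw [Finset.sum_congr rfl (fun S _ => hsummand S), ← Finset.sum_filter]
  by_cases hR'T : R'.1 ≤ T
  · -- main case
    set j := Module.finrank F (R'.1 ⊓ R : Submodule F (Fin n → F)) with hj
    have hjr : j ≤ r := by
      rw [hj]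
      exact le_trans (Submodule.finrank_mono inf_le_right) (le_of_eq hRr)
    have hmaps : ∀ S ∈ Finset.univ.filter (fun S : Gr F n s => S.1 ≤ T ∧ R'.1 ≤ S.1),
        Module.finrank F (S.1 ⊓ R : Submodule F (Fin n → F)) ∈ Finset.Icc j r := by
      intro S hS
      rw [Finset.mem_filter] at hS
      rw [Finset.mem_Icc]
      constructor
      · rw [hj]
        exact Submodule.finrank_mono (inf_le_inf_right R hS.2.2)
      · exact le_trans (Submodule.finrank_mono inf_le_right) (le_of_eq hRr)
    rw [← Finset.sum_fiberwise_of_maps_to hmaps]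
    have hinner : ∀ i ∈ Finset.Icc j r,
        (∑ S ∈ (Finset.univ.filter (fun S : Gr F n s => S.1 ≤ T ∧ R'.1 ≤ S.1)).filter
            (fun S => Module.finrank F (S.1 ⊓ R : Submodule F (Fin n → F)) = i),
          solveF M r (Module.finrank F (S.1 ⊓ R : Submodule F (Fin n → F))))
        = (M j i : ℚ) * solveF M r i := by
      intro i _
      rw [Finset.sum_congr rfl (fun S hS => by
        rw [(Finset.mem_filter.mp hS).2]), Finset.sum_const, nsmul_eq_mul]
      congr 1
      -- the cardinality is M j i
      rw [Finset.filter_filter]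
      have hcard : ((Finset.univ.filter (fun S : Gr F n s =>
          (S.1 ≤ T ∧ R'.1 ≤ S.1) ∧ Module.finrank F (S.1 ⊓ R : Submodule F (Fin n → F)) = i)).card)
          = Nat.card {S : Gr F n s //
            (S.1 ≤ T ∧ R'.1 ≤ S.1) ∧ Module.finrank F (S.1 ⊓ R : Submodule F (Fin n → F)) = i} := by
        rw [Nat.card_eq_fintype_card, Fintype.card_subtype]
      have hEquiv : {S : Gr F n s //
          (S.1 ≤ T ∧ R'.1 ≤ S.1) ∧ Module.finrank F (S.1 ⊓ R : Submodule F (Fin n → F)) = i}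
          ≃ {S : Submodule F (Fin n → F) //
          S ≤ T ∧ R'.1 ≤ S ∧ Module.finrank F S = s ∧
            Module.finrank F (S ⊓ R : Submodule F (Fin n → F)) = i} :=
        { toFun := fun x => ⟨x.1.1, x.2.1.1, x.2.1.2, x.1.2, x.2.2⟩
          invFun := fun y => ⟨⟨y.1, y.2.2.2.1⟩, ⟨⟨y.2.1, y.2.2.1⟩, y.2.2.2.2⟩⟩
          left_inv := fun x => rfl
          right_inv := fun y => rfl }
      rw [Nat.cast_inj, hcard, Nat.card_congr hEquiv]
      have hpi : Module.finrank F (Fin (r+s) → F) = r + s := by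
        rw [Module.finrank_pi]
        exact Fintype.card_fin _
      exact count_transport T R R'.1 (⊤ : Submodule F (Fin (r+s) → F)) (R0 j) (R0' j)
        hRT hR'T le_top le_top
        (by rw [hT, finrank_top, hpi])
        (by rw [hRr, hR0 j])
        (by rw [R'.2, hR0' j])
        (by rw [inf_comm, ← hj, hR0R0' j, min_eq_left hjr]) s i
    rw [Finset.sum_congr rfl hinner, solveF_spec M r hdiag j hjr]
    -- LHS
    have hiff : R'.1 = R ↔ j = r := by
      constructor
      · intro h
        rw [hj, h, inf_idem, hRr]
      · intro h
        have h1 : R'.1 ⊓ R = R'.1 := by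
          apply Submodule.eq_of_le_of_finrank_le inf_le_left
          rw [← hj] at *
          rw [R'.2, ← h]
        have h2 : R'.1 ≤ R := by rw [← h1]; exact inf_le_right
        exact Submodule.eq_of_le_of_finrank_eq h2 (by rw [R'.2, hRr])
    by_cases hcase : R'.1 = R
    · rw [if_pos hcase, if_pos (hiff.mp hcase)]
    · rw [if_neg hcase, if_neg (fun h => hcase (hiff.mpr h))]
  · -- degenerate case : R' is not inside T
    have hempty : Finset.univ.filter (fun S : Gr F n s => S.1 ≤ T ∧ R'.1 ≤ S.1) = ∅ := by
      apply Finset.filter_eq_empty_iff.mpr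
      intro S _
      rintro ⟨h1, h2⟩
      exact hR'T (h2.trans h1)
    rw [hempty, Finset.sum_empty, if_neg (fun h => hR'T (by rw [h]; exact hRT))]
end
end

section
/- Fix a prime power q and integers s > r ≥ 1 and u ≥ 1. There exists d₀ depending only on r such that the following holds for every d ≥ d₀. Let ℓ, m ≥ 1, let L = F_{q^ℓ} ⊆ K = F_{q^{ℓm}} be finite fields, and let N ∈ L^{s×r} and x* ∈ L^{s×u} be jointly F_q-generic of degree d. Let w' ∈ K^r and w ∈ K^u be such that the r+u coordinates of (w', w) are linearly independent over L. Define P_out = {span_{F_q}(Nw' + (Nx + x*)w) : x ∈ L^{r×u}} and P_in = {span_{F_q}(Nw' + Nxw) : x ∈ L^{r×u}}. Then: (1) for every x ∈ L^{r×u}, the r coordinates of w' + xw ∈ K^r are linearly independent over L; (2) for distinct x, x' ∈ L^{r×u}, the corresponding members of P_out are distinct (likewise for P_in), and every member of P_out and of P_in has F_q-dimension s; (3) for distinct P, P' ∈ P_out one has dim_{F_q}(P ∩ P') < r, and likewise for distinct P, P' ∈ P_in; (4) for P ∈ P_out and P' ∈ P_in one has dim_{F_q}(P ∩ P') ≤ r;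 (5) Σ_{P∈P_out} Σ_{R ≤ P, dim_{F_q}R = r} e_R = Σ_{P∈P_in} Σ_{R ≤ P, dim_{F_q}R = r} e_R as formal integer sums over the r-dimensional F_q-subspaces of K. -/
open scoped Classical

noncomputable section

/-- A family `a : ι → E` of elements of the `F`-algebra `E` is `F`-generic of degree `d` if no
nonzero polynomial over `F` in the variables `ι` of total degree at most `d` vanishes at `a`. -/
def IsGeneric (F : Type) [Field F] (E : Type) [CommRing E] [Algebra F E]
    {ι : Type} (d : ℕ) (a : ι → E) : Prop :=
  ∀ P : MvPolynomial ι F, P ≠ 0 → P.totalDegree ≤ d → MvPolynomial.aeval a P ≠ 0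

/-- The vector `Nw' + (Nx + x*)w ∈ K^s` defining a member of the out-flip. -/
def outVec (L K : Type) [Field L] [Field K] [Algebra L K] (s r u : ℕ)
    (N : Matrix (Fin s) (Fin r) L) (xs : Matrix (Fin s) (Fin u) L)
    (w' : Fin r → K) (w : Fin u → K) (x : Matrix (Fin r) (Fin u) L) : Fin s → K :=
  Matrix.mulVec (N.map (algebraMap L K)) w' +
    Matrix.mulVec
      (N.map (algebraMap L K) * x.map (algebraMap L K) + xs.map (algebraMap L K)) w

/-- The vector `Nw' + Nxw ∈ K^s` defining a member of the in-flip. -/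
def inVec (L K : Type) [Field L] [Field K] [Algebra L K] (s r u : ℕ)
    (N : Matrix (Fin s) (Fin r) L)
    (w' : Fin r → K) (w : Fin u → K) (x : Matrix (Fin r) (Fin u) L) : Fin s → K :=
  Matrix.mulVec (N.map (algebraMap L K)) w' +
    Matrix.mulVec (N.map (algebraMap L K) * x.map (algebraMap L K)) w

/-- `span_{F_q}(Nw' + (Nx + x*)w)`, the `F`-span in `K` of the `s` coordinates. -/
def spanOut (F L K : Type) [Field F] [Field L] [Field K] [Algebra F K] [Algebra L K]
    (s r u : ℕ) (N : Matrix (Fin s) (Fin r) L) (xs : Matrix (Fin s) (Fin u) L)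
    (w' : Fin r → K) (w : Fin u → K) (x : Matrix (Fin r) (Fin u) L) : Submodule F K :=
  Submodule.span F (Set.range (outVec L K s r u N xs w' w x))

/-- `span_{F_q}(Nw' + Nxw)`, the `F`-span in `K` of the `s` coordinates. -/
def spanIn (F L K : Type) [Field F] [Field L] [Field K] [Algebra F K] [Algebra L K]
    (s r u : ℕ) (N : Matrix (Fin s) (Fin r) L)
    (w' : Fin r → K) (w : Fin u → K) (x : Matrix (Fin r) (Fin u) L) : Submodule F K :=
  Submodule.span F (Set.range (inVec L K s r u N w' w x))

/-! ### Auxiliary machinery -/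

section RightInv

variable {F : Type} [Field F] {s : ℕ}

/-- A matrix with linearly independent rows has a right inverse. -/
lemma AbsAux.exists_right_inv {n : ℕ} (c : Fin n → Fin s → F)
    (hc : LinearIndependent F c) :
    ∃ B : Matrix (Fin s) (Fin n) F, (Matrix.of c) * B = 1 := by
  apply Matrix.mulVec_surjective_iff_exists_right_inverse.mp
  have hrk : (Matrix.of c).rank = n := by
    have := LinearIndependent.rank_matrix (M := Matrix.of c) hc
    simpa using this
  have hrange : LinearMap.range (Matrix.of c).mulVecLin = ⊤ := by
    apply Submodule.eq_top_of_finrank_eq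
    rw [← Matrix.rank, hrk]
    simp [Module.finrank_fintype_fun_eq_card]
  have hsurj : Function.Surjective (Matrix.of c).mulVecLin :=
    LinearMap.range_eq_top.mp hrange
  simpa [Matrix.mulVecLin_apply, Function.Surjective] using hsurj

end RightInv

section Det

variable {F L : Type} [Field F] [Field L] [Algebra F L] {s : ℕ} {ι : Type}

lemma AbsAux.aeval_det_poly {n : ℕ} (c : Fin n → Fin s → F) (g : Fin n × Fin s → ι)
    {S : Type} [CommRing S] [Algebra F S] (a : ι → S) :
    MvPolynomial.aeval a
        (Matrix.of fun t i : Fin n =>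
          ∑ k, MvPolynomial.C (c t k) * MvPolynomial.X (g (i, k))).det
      = (Matrix.of fun t i : Fin n => ∑ k, algebraMap F S (c t k) * a (g (i, k))).det := by
  have := RingHom.map_det
    ((MvPolynomial.aeval a : MvPolynomial ι F →ₐ[F] S) : MvPolynomial ι F →+* S)
    (Matrix.of fun t i : Fin n => ∑ k, MvPolynomial.C (c t k) * MvPolynomial.X (g (i, k)))
  rw [show ((MvPolynomial.aeval a : MvPolynomial ι F →ₐ[F] S) : MvPolynomial ι F →+* S)
      ((Matrix.of fun t i : Fin n =>
        ∑ k, MvPolynomial.C (c t k) * MvPolynomial.X (g (i, k))).det)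
    = MvPolynomial.aeval a
      ((Matrix.of fun t i : Fin n =>
        ∑ k, MvPolynomial.C (c t k) * MvPolynomial.X (g (i, k))).det)
    from rfl] at this
  rw [this]
  congr 1
  ext t i
  simp [Matrix.map_apply, MvPolynomial.aeval_C]

lemma AbsAux.totalDegree_det_poly {n : ℕ} (c : Fin n → Fin s → F) (g : Fin n × Fin s → ι) :
    (Matrix.of fun t i : Fin n =>
        ∑ k, MvPolynomial.C (c t k) * MvPolynomial.X (g (i, k))).det.totalDegree ≤ n := by
  rw [Matrix.det_apply']
  apply (MvPolynomial.totalDegree_finset_sum _ _).trans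
  apply Finset.sup_le
  intro σ _
  have h1 : (((Equiv.Perm.sign σ : ℤ) : MvPolynomial ι F)).totalDegree = 0 := by
    rw [← map_intCast (MvPolynomial.C : F →+* MvPolynomial ι F)]
    exact MvPolynomial.totalDegree_C _
  apply (MvPolynomial.totalDegree_mul _ _).trans
  rw [h1, zero_add]
  apply (MvPolynomial.totalDegree_finset_prod _ _).trans
  have h2 : ∀ i : Fin n, (∑ k, MvPolynomial.C (c (σ i) k) *
      (MvPolynomial.X (g (i, k)) : MvPolynomial ι F)).totalDegree ≤ 1 := by
    intro i
    apply (MvPolynomial.totalDegree_finset_sum _ _).trans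
    apply Finset.sup_le
    intro k _
    apply (MvPolynomial.totalDegree_mul _ _).trans
    simp [MvPolynomial.totalDegree_C, MvPolynomial.totalDegree_X]
  have h3 : (∑ i, (Matrix.of (fun t i : Fin n =>
        ∑ k, MvPolynomial.C (c t k) * MvPolynomial.X (g (i, k))) (σ i) i).totalDegree)
      ≤ ∑ _i : Fin n, 1 :=
    Finset.sum_le_sum (fun i _ => h2 i)
  simpa using h3

/-- Main genericity consequence: determinants of `C`-combinations of distinct generic entries
are nonzero. -/
lemma AbsAux.det_gen_ne {d n : ℕ} {Av : ι → L} (hgen : IsGeneric F L d Av) (hd : n ≤ d)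
    (c : Fin n → Fin s → F) (hc : LinearIndependent F c)
    (g : Fin n × Fin s → ι) (hg : Function.Injective g) :
    (Matrix.of fun t i : Fin n => ∑ k, algebraMap F L (c t k) * Av (g (i, k))).det ≠ 0 := by
  obtain ⟨B, hB⟩ := AbsAux.exists_right_inv c hc
  set Q := (Matrix.of fun t i : Fin n =>
    ∑ k, MvPolynomial.C (c t k) * MvPolynomial.X (g (i, k))).det with hQ
  have hQne : Q ≠ 0 := by
    intro h0
    have := AbsAux.aeval_det_poly c g (S := F) (Function.extend g (fun p => B p.2 p.1) 0)
    rw [← hQ, h0, map_zero] at this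
    have hmat : (Matrix.of fun t i : Fin n =>
        ∑ k, algebraMap F F (c t k) * Function.extend g (fun p => B p.2 p.1) 0 (g (i, k)))
        = Matrix.of c * B := by
      ext t i
      simp [hg.extend_apply, Matrix.mul_apply]
    rw [hmat, hB] at this
    simp at this
  have := hgen Q hQne ((AbsAux.totalDegree_det_poly c g).trans hd)
  rw [AbsAux.aeval_det_poly] at this
  exact this

end Det

section Coeffs

variable {F L K : Type} [Field F] [Field L] [Field K] [Algebra F L] [Algebra L K]
  [Algebra F K] [IsScalarTower F L K] {s r u : ℕ}

/-- normal form of an `L`-combination of the coordinates of `(w', w)`. -/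
def Ee (w' : Fin r → K) (w : Fin u → K) (a : Fin r → L) (b : Fin u → L) : K :=
  (∑ i, algebraMap L K (a i) * w' i) + ∑ j, algebraMap L K (b j) * w j

/-- `cᵀN` over `L`. -/
def alN (N : Matrix (Fin s) (Fin r) L) (c : Fin s → F) : Fin r → L :=
  fun i => ∑ k, algebraMap F L (c k) * N k i

/-- `cᵀx*` over `L`. -/
def gaX (xs : Matrix (Fin s) (Fin u) L) (c : Fin s → F) : Fin u → L :=
  fun j => ∑ k, algebraMap F L (c k) * xs k j

/-- `cᵀ(Nx + x*)` over `L`. -/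
def boX (N : Matrix (Fin s) (Fin r) L) (xs : Matrix (Fin s) (Fin u) L)
    (x : Matrix (Fin r) (Fin u) L) (c : Fin s → F) : Fin u → L :=
  fun j => (∑ i, alN N c i * x i j) + gaX xs c j

/-- `cᵀNx` over `L`. -/
def biX (N : Matrix (Fin s) (Fin r) L)
    (x : Matrix (Fin r) (Fin u) L) (c : Fin s → F) : Fin u → L :=
  fun j => ∑ i, alN N c i * x i j

variable {w' : Fin r → K} {w : Fin u → K}

lemma Ee_inj (hw : LinearIndependent L (Sum.elim w' w)) {a a' : Fin r → L} {b b' : Fin u → L}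
    (h : Ee w' w a b = Ee w' w a' b') : a = a' ∧ b = b' := by
  have h0 : (∑ i, (a i - a' i) • w' i) + ∑ j, (b j - b' j) • w j = 0 := by
    simp only [Algebra.smul_def, map_sub, sub_mul, Finset.sum_sub_distrib]
    rw [Ee, Ee] at h
    linear_combination h
  have h2 := Fintype.linearIndependent_iff.mp hw
    (Sum.elim (fun i => a i - a' i) (fun j => b j - b' j)) ?_
  · constructor
    · funext i; have := h2 (Sum.inl i); simpa [sub_eq_zero] using this
    · funext j; have := h2 (Sum.inr j); simpa [sub_eq_zero] using this
  · rw [Fintype.sum_sum_type]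
    simpa using h0

lemma Ee_smul (l : L) (a : Fin r → L) (b : Fin u → L) :
    algebraMap L K l * Ee w' w a b = Ee w' w (fun i => l * a i) (fun j => l * b j) := by
  simp [Ee, Finset.mul_sum, mul_add, map_mul, mul_assoc]

lemma Ee_sum {n : ℕ} (A : Fin n → Fin r → L) (B : Fin n → Fin u → L) :
    ∑ k, Ee w' w (A k) (B k)
      = Ee w' w (fun i => ∑ k, A k i) (fun j => ∑ k, B k j) := by
  simp only [Ee, Finset.sum_add_distrib, map_sum, Finset.sum_mul]
  congr 1 <;> rw [Finset.sum_comm]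

lemma outVec_apply (N : Matrix (Fin s) (Fin r) L) (xs : Matrix (Fin s) (Fin u) L)
    (x : Matrix (Fin r) (Fin u) L) (k : Fin s) :
    outVec L K s r u N xs w' w x k
      = Ee w' w (fun i => N k i) (fun j => (∑ i, N k i * x i j) + xs k j) := by
  simp [outVec, Ee, Matrix.mulVec, dotProduct, Matrix.map_apply, Matrix.add_apply,
    Matrix.mul_apply, map_sum, map_add, map_mul]

lemma inVec_apply (N : Matrix (Fin s) (Fin r) L)
    (x : Matrix (Fin r) (Fin u) L) (k : Fin s) :
    inVec L K s r u N w' w x k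
      = Ee w' w (fun i => N k i) (fun j => ∑ i, N k i * x i j) := by
  simp [inVec, Ee, Matrix.mulVec, dotProduct, Matrix.map_apply,
    Matrix.mul_apply, map_sum, map_mul]

lemma expand_out (N : Matrix (Fin s) (Fin r) L) (xs : Matrix (Fin s) (Fin u) L)
    (x : Matrix (Fin r) (Fin u) L) (c : Fin s → F) :
    ∑ k, c k • outVec L K s r u N xs w' w x k = Ee w' w (alN N c) (boX N xs x c) := by
  have step1 : ∀ k : Fin s, c k • outVec L K s r u N xs w' w x k
      = Ee w' w (fun i => algebraMap F L (c k) * N k i)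
          (fun j => algebraMap F L (c k) * ((∑ i, N k i * x i j) + xs k j)) := by
    intro k
    rw [outVec_apply, Algebra.smul_def, IsScalarTower.algebraMap_apply F L K, Ee_smul]
  rw [Finset.sum_congr rfl (fun k _ => step1 k), Ee_sum]
  congr 1
  funext j
  show (∑ k, algebraMap F L (c k) * ((∑ i, N k i * x i j) + xs k j)) = boX N xs x c j
  simp only [boX, alN, gaX, mul_add, Finset.sum_add_distrib, Finset.mul_sum, Finset.sum_mul]
  congr 1
  rw [Finset.sum_comm]
  simp [mul_assoc]

lemma expand_in (N : Matrix (Fin s) (Fin r) L)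
    (x : Matrix (Fin r) (Fin u) L) (c : Fin s → F) :
    ∑ k, c k • inVec L K s r u N w' w x k = Ee w' w (alN N c) (biX N x c) := by
  have step1 : ∀ k : Fin s, c k • inVec L K s r u N w' w x k
      = Ee w' w (fun i => algebraMap F L (c k) * N k i)
          (fun j => algebraMap F L (c k) * (∑ i, N k i * x i j)) := by
    intro k
    rw [inVec_apply, Algebra.smul_def, IsScalarTower.algebraMap_apply F L K, Ee_smul]
  rw [Finset.sum_congr rfl (fun k _ => step1 k), Ee_sum]
  congr 1
  funext j
  show (∑ k, algebraMap F L (c k) * (∑ i, N k i * x i j)) = biX N x c j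
  simp only [biX, alN, Finset.mul_sum, Finset.sum_mul]
  rw [Finset.sum_comm]
  simp [mul_assoc]

end Coeffs

section Spec

variable {F L : Type} [Field F] [Field L] [Algebra F L] {s r u : ℕ}
variable {N : Matrix (Fin s) (Fin r) L} {xs : Matrix (Fin s) (Fin u) L} {d : ℕ}

lemma alN_sub (c c' : Fin s → F) : alN N (c - c') = alN N c - alN N c' := by
  funext i
  simp [alN, sub_mul, Finset.sum_sub_distrib]

lemma alN_zero
    (hgen : IsGeneric F L d (Sum.elim (fun p : Fin s × Fin r => N p.1 p.2)
      (fun p : Fin s × Fin u => xs p.1 p.2)))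
    (hd : 1 ≤ d) (hr : 0 < r) {c : Fin s → F} (h : alN N c = 0) : c = 0 := by
  by_contra hc
  have hind : LinearIndependent F (fun _ : Fin 1 => c) :=
    linearIndependent_unique_iff.mpr (by simpa using hc)
  have := AbsAux.det_gen_ne hgen hd (fun _ : Fin 1 => c) hind
    (fun p => Sum.inl (p.2, ⟨0, hr⟩))
    (fun p p' hpp => by
      simp only [Sum.inl.injEq, Prod.mk.injEq] at hpp
      exact Prod.ext (Subsingleton.elim _ _) hpp.1)
  apply this
  rw [Matrix.det_fin_one]
  have h2 : alN N c ⟨0, hr⟩ = 0 := by rw [h]; rfl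
  simpa [alN] using h2

lemma alN_inj
    (hgen : IsGeneric F L d (Sum.elim (fun p : Fin s × Fin r => N p.1 p.2)
      (fun p : Fin s × Fin u => xs p.1 p.2)))
    (hd : 1 ≤ d) (hr : 0 < r) {c c' : Fin s → F} (h : alN N c = alN N c') : c = c' := by
  have h2 : alN N (c - c') = 0 := by rw [alN_sub, h, sub_self]
  have := alN_zero hgen hd hr h2
  exact sub_eq_zero.mp this

lemma det_alN_ne
    (hgen : IsGeneric F L d (Sum.elim (fun p : Fin s × Fin r => N p.1 p.2)
      (fun p : Fin s × Fin u => xs p.1 p.2)))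
    (hd : r ≤ d) {c : Fin r → Fin s → F} (hc : LinearIndependent F c) :
    (Matrix.of fun t i => alN N (c t) i).det ≠ 0 := by
  have := AbsAux.det_gen_ne hgen hd c hc (fun p => Sum.inl (p.2, p.1))
    (fun p p' hpp => by
      simp only [Sum.inl.injEq, Prod.mk.injEq] at hpp
      exact Prod.ext hpp.2 hpp.1)
  convert this using 2
  ext t i
  simp [alN]

lemma det_aug_ne
    (hgen : IsGeneric F L d (Sum.elim (fun p : Fin s × Fin r => N p.1 p.2)
      (fun p : Fin s × Fin u => xs p.1 p.2)))
    (hd : r + 1 ≤ d) (j0 : Fin u) {c : Fin (r + 1) → Fin s → F}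
    (hc : LinearIndependent F c) :
    (Matrix.of fun t => Fin.cons (gaX xs (c t) j0) (alN N (c t)) :
      Matrix (Fin (r + 1)) (Fin (r + 1)) L).det ≠ 0 := by
  have hginj : Function.Injective
      (fun p : Fin (r + 1) × Fin s =>
        (Fin.cases (Sum.inr (p.2, j0)) (fun i => Sum.inl (p.2, i)) p.1 :
          (Fin s × Fin r) ⊕ (Fin s × Fin u))) := by
    rintro ⟨a, k⟩ ⟨a', k'⟩ hpp
    simp only at hpp
    induction a using Fin.cases <;> induction a' using Fin.cases <;>
      simp_all [Fin.cases_zero, Fin.cases_succ, Prod.ext_iff]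
  have := AbsAux.det_gen_ne hgen hd c hc _ hginj
  convert this using 2
  ext t a
  induction a using Fin.cases with
  | zero => simp [gaX, Fin.cases_zero]
  | succ i => simp [alN, Fin.cases_succ]

/-- `Pi.single` composed with an injection is linearly independent. -/
lemma single_comp_indep {F : Type} [Field F] {s n : ℕ} (e : Fin n → Fin s)
    (he : Function.Injective e) :
    LinearIndependent F (fun t => (Pi.single (e t) (1 : F) : Fin s → F)) := by
  rw [Fintype.linearIndependent_iff]
  intro g hg t
  have := congr_fun hg (e t)
  simpa [Finset.sum_apply, Pi.single_apply, he.eq_iff] using this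

lemma alN_single (k : Fin s) : alN N (Pi.single k 1 : Fin s → F) = fun i => N k i := by
  funext i
  simp [alN, Pi.single_apply, apply_ite (algebraMap F L), ite_mul]

lemma gaX_single (k : Fin s) : gaX xs (Pi.single k 1 : Fin s → F) = fun j => xs k j := by
  funext j
  simp [gaX, Pi.single_apply, apply_ite (algebraMap F L), ite_mul]

end Spec

section Key

variable {F L K : Type} [Field F] [Field L] [Field K] [Algebra F L] [Algebra L K]
  [Algebra F K] [IsScalarTower F L K] {s r u : ℕ}
variable {N : Matrix (Fin s) (Fin r) L} {xs : Matrix (Fin s) (Fin u) L}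
variable {w' : Fin r → K} {w : Fin u → K} {d : ℕ}

lemma single_sum (v : Fin s → K) (k : Fin s) :
    ∑ l, (Pi.single k (1 : F) : Fin s → F) l • v l = v k := by
  rw [Finset.sum_eq_single k]
  · simp
  · intro l _ hl
    simp [Pi.single_apply, hl]
  · simp

/-- Coefficient comparison for two out-vectors. -/
lemma keyOO (hw : LinearIndependent L (Sum.elim w' w))
    (hgen : IsGeneric F L d (Sum.elim (fun p : Fin s × Fin r => N p.1 p.2)
      (fun p : Fin s × Fin u => xs p.1 p.2)))
    (hd : 1 ≤ d) (hr : 0 < r) {c c' : Fin s → F} {x x' : Matrix (Fin r) (Fin u) L}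
    (h : ∑ k, c k • outVec L K s r u N xs w' w x k
       = ∑ k, c' k • outVec L K s r u N xs w' w x' k) :
    c = c' ∧ ∀ j, ∑ i, alN N c i * (x i j - x' i j) = 0 := by
  rw [expand_out, expand_out] at h
  obtain ⟨h1, h2⟩ := Ee_inj hw h
  have hcc : c = c' := alN_inj hgen hd hr h1
  subst hcc
  refine ⟨rfl, fun j => ?_⟩
  have := congr_fun h2 j
  simp only [boX] at this
  simp only [mul_sub, Finset.sum_sub_distrib]
  rw [sub_eq_zero]
  exact add_right_cancel this

/-- Coefficient comparison for two in-vectors. -/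
lemma keyII (hw : LinearIndependent L (Sum.elim w' w))
    (hgen : IsGeneric F L d (Sum.elim (fun p : Fin s × Fin r => N p.1 p.2)
      (fun p : Fin s × Fin u => xs p.1 p.2)))
    (hd : 1 ≤ d) (hr : 0 < r) {c c' : Fin s → F} {x x' : Matrix (Fin r) (Fin u) L}
    (h : ∑ k, c k • inVec L K s r u N w' w x k
       = ∑ k, c' k • inVec L K s r u N w' w x' k) :
    c = c' ∧ ∀ j, ∑ i, alN N c i * (x i j - x' i j) = 0 := by
  rw [expand_in (F := F), expand_in (F := F)] at h
  obtain ⟨h1, h2⟩ := Ee_inj hw h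
  have hcc : c = c' := alN_inj (xs := xs) hgen hd hr h1
  subst hcc
  refine ⟨rfl, fun j => ?_⟩
  have := congr_fun h2 j
  simp only [biX] at this
  simp only [mul_sub, Finset.sum_sub_distrib]
  rw [sub_eq_zero]
  exact this

/-- Coefficient comparison between an out-vector and an in-vector. -/
lemma keyOI (hw : LinearIndependent L (Sum.elim w' w))
    (hgen : IsGeneric F L d (Sum.elim (fun p : Fin s × Fin r => N p.1 p.2)
      (fun p : Fin s × Fin u => xs p.1 p.2)))
    (hd : 1 ≤ d) (hr : 0 < r) {c c' : Fin s → F} {x x' : Matrix (Fin r) (Fin u) L}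
    (h : ∑ k, c k • outVec L K s r u N xs w' w x k
       = ∑ k, c' k • inVec L K s r u N w' w x' k) :
    c = c' ∧ ∀ j, gaX xs c j = ∑ i, alN N c i * (x' i j - x i j) := by
  rw [expand_out, expand_in (F := F)] at h
  obtain ⟨h1, h2⟩ := Ee_inj hw h
  have hcc : c = c' := alN_inj (xs := xs) hgen hd hr h1
  subst hcc
  refine ⟨rfl, fun j => ?_⟩
  have := congr_fun h2 j
  simp only [boX, biX] at this
  simp only [mul_sub, Finset.sum_sub_distrib]
  linear_combination this

/-- The out-vectors are linearly independent over `F`. -/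
lemma out_indep (hw : LinearIndependent L (Sum.elim w' w))
    (hgen : IsGeneric F L d (Sum.elim (fun p : Fin s × Fin r => N p.1 p.2)
      (fun p : Fin s × Fin u => xs p.1 p.2)))
    (hd : 1 ≤ d) (hr : 0 < r) (x : Matrix (Fin r) (Fin u) L) :
    LinearIndependent F (outVec L K s r u N xs w' w x) := by
  rw [Fintype.linearIndependent_iff]
  intro g hg
  have h0 : ∑ k, g k • outVec L K s r u N xs w' w x k
      = ∑ k, (0 : Fin s → F) k • outVec L K s r u N xs w' w x k := by
    simpa using hg
  have := (keyOO hw hgen hd hr h0).1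
  intro k; rw [this]; rfl

/-- The in-vectors are linearly independent over `F`. -/
lemma in_indep (hw : LinearIndependent L (Sum.elim w' w))
    (hgen : IsGeneric F L d (Sum.elim (fun p : Fin s × Fin r => N p.1 p.2)
      (fun p : Fin s × Fin u => xs p.1 p.2)))
    (hd : 1 ≤ d) (hr : 0 < r) (x : Matrix (Fin r) (Fin u) L) :
    LinearIndependent F (inVec L K s r u N w' w x) := by
  rw [Fintype.linearIndependent_iff]
  intro g hg
  have h0 : ∑ k, g k • inVec L K s r u N w' w x k
      = ∑ k, (0 : Fin s → F) k • inVec L K s r u N w' w x k := by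
    simpa using hg
  have := (keyII (xs := xs) hw hgen hd hr h0).1
  intro k; rw [this]; rfl

/-- Extract independent coefficient families for independent members of a span. -/
lemma coeffs_of_mem {n : ℕ} (v : Fin s → K) (z : Fin n → K)
    (hz : LinearIndependent F z)
    (hmem : ∀ t, z t ∈ Submodule.span F (Set.range v)) :
    ∃ c : Fin n → Fin s → F,
      (∀ t, ∑ k, c t k • v k = z t) ∧ LinearIndependent F c := by
  have hch : ∀ t, ∃ c : Fin s → F, ∑ k, c k • v k = z t := by
    intro t
    exact (Submodule.mem_span_range_iff_exists_fun F).mp (hmem t)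
  choose c hc using hch
  refine ⟨c, hc, ?_⟩
  have hcomp : z = (Fintype.linearCombination F v) ∘ c := by
    funext t
    rw [Function.comp_apply, Fintype.linearCombination_apply]
    exact (hc t).symm
  exact LinearIndependent.of_comp (Fintype.linearCombination F v) (hcomp ▸ hz)

/-- Nondegeneracy: the matrix `(alN N (c t) i)` is invertible, so kills nothing. -/
lemma y_eq_zero_of
    (hgen : IsGeneric F L d (Sum.elim (fun p : Fin s × Fin r => N p.1 p.2)
      (fun p : Fin s × Fin u => xs p.1 p.2)))
    (hd : r ≤ d) {c : Fin r → Fin s → F} (hc : LinearIndependent F c)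
    {Y : Matrix (Fin r) (Fin u) L}
    (h : ∀ t j, ∑ i, alN N (c t) i * Y i j = 0) : Y = 0 := by
  set M : Matrix (Fin r) (Fin r) L := Matrix.of fun t i => alN N (c t) i with hM
  have hdet : IsUnit M.det := isUnit_iff_ne_zero.mpr (det_alN_ne hgen hd hc)
  have hMY : M * Y = 0 := by
    ext t j
    simpa [Matrix.mul_apply, hM] using h t j
  calc Y = (1 : Matrix (Fin r) (Fin r) L) * Y := (Matrix.one_mul Y).symm
    _ = (M⁻¹ * M) * Y := by rw [Matrix.nonsing_inv_mul M hdet]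
    _ = M⁻¹ * (M * Y) := by rw [Matrix.mul_assoc]
    _ = 0 := by rw [hMY, Matrix.mul_zero]

end Key

/-- **Lemma 6.2 (absorber admissibility)**: for `d ≥ d₀(r)`, fields `F_q ⊆ L = F_{q^ℓ} ⊆
K = F_{q^{ℓm}}`, jointly `F_q`-generic `N ∈ L^{s×r}`, `x* ∈ L^{s×u}` of degree `d`, and
`(w', w) ∈ K^r × K^u` with `L`-linearly independent coordinates, the out- and in-flips
`P_out, P_in` satisfy the five listed properties. -/
theorem absorber_admissible (s r u : ℕ) (hr : 1 ≤ r) (hrs : r < s) (hu : 1 ≤ u) :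
    ∃ d₀ : ℕ, ∀ d : ℕ, d₀ ≤ d →
      ∀ (F : Type) [Field F] [Fintype F],
      ∀ ℓ m : ℕ, 1 ≤ ℓ → 1 ≤ m →
      ∀ (L : Type) [Field L] [Algebra F L], Module.finrank F L = ℓ →
      ∀ (K : Type) [Field K] [Algebra F K] [Algebra L K] [IsScalarTower F L K],
        Module.finrank L K = m →
      ∀ (N : Matrix (Fin s) (Fin r) L) (xs : Matrix (Fin s) (Fin u) L),
        IsGeneric F L d (Sum.elim (fun p : Fin s × Fin r => N p.1 p.2)
          (fun p : Fin s × Fin u => xs p.1 p.2)) →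
      ∀ (w' : Fin r → K) (w : Fin u → K),
        LinearIndependent L (Sum.elim w' w) →
        -- (1) `w' + xw` is `L`-linearly independent for all `x ∈ L^{r×u}`
        (∀ x : Matrix (Fin r) (Fin u) L,
          LinearIndependent L
            (fun i => w' i + Matrix.mulVec (x.map (algebraMap L K)) w i)) ∧
        -- (2) distinct parameters give distinct spaces, all of dimension `s`
        (Function.Injective (spanOut F L K s r u N xs w' w)) ∧
        (Function.Injective (spanIn F L K s r u N w' w)) ∧
        (∀ x : Matrix (Fin r) (Fin u) L,
          Module.finrank F (spanOut F L K s r u N xs w' w x) = s ∧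
          Module.finrank F (spanIn F L K s r u N w' w x) = s) ∧
        -- (3) distinct members of the same flip meet in dimension `< r`
        (∀ P ∈ Set.range (spanOut F L K s r u N xs w' w),
          ∀ P' ∈ Set.range (spanOut F L K s r u N xs w' w), P ≠ P' →
            Module.finrank F (P ⊓ P' : Submodule F K) < r) ∧
        (∀ P ∈ Set.range (spanIn F L K s r u N w' w),
          ∀ P' ∈ Set.range (spanIn F L K s r u N w' w), P ≠ P' →
            Module.finrank F (P ⊓ P' : Submodule F K) < r) ∧
        -- (4) members of different flips meet in dimension `≤ r`
        (∀ P ∈ Set.range (spanOut F L K s r u N xs w' w),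
          ∀ P' ∈ Set.range (spanIn F L K s r u N w' w),
            Module.finrank F (P ⊓ P' : Submodule F K) ≤ r) ∧
        -- (5) `∂_{s,r} P_out = ∂_{s,r} P_in`
        (∀ R : Submodule F K, Module.finrank F R = r →
          {P | P ∈ Set.range (spanOut F L K s r u N xs w' w) ∧ R ≤ P}.ncard =
            {P | P ∈ Set.range (spanIn F L K s r u N w' w) ∧ R ≤ P}.ncard) := by
  refine ⟨r + 1, ?_⟩
  intro d hd F _ _ ℓ m hℓ hm L _ _ hL K _ _ _ _ hK N xs hgen w' w hw
  have hr0 : 0 < r := hr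
  have hd1 : 1 ≤ d := le_trans (by omega) hd
  have hdr : r ≤ d := le_trans (by omega) hd
  have hdr1 : r + 1 ≤ d := hd
  have j0 : Fin u := ⟨0, hu⟩
  haveI : FiniteDimensional F L := Module.finite_of_finrank_pos (by rw [hL]; exact hℓ)
  haveI : FiniteDimensional L K := Module.finite_of_finrank_pos (by rw [hK]; exact hm)
  haveI : FiniteDimensional F K := Module.Finite.trans L K
  -- membership unfolding
  have hOmem : ∀ (x : Matrix (Fin r) (Fin u) L) (z : K),
      z ∈ spanOut F L K s r u N xs w' w x ↔
        ∃ c : Fin s → F, ∑ k, c k • outVec L K s r u N xs w' w x k = z :=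
    fun x z => Submodule.mem_span_range_iff_exists_fun F
  have hImem : ∀ (x : Matrix (Fin r) (Fin u) L) (z : K),
      z ∈ spanIn F L K s r u N w' w x ↔
        ∃ c : Fin s → F, ∑ k, c k • inVec L K s r u N w' w x k = z :=
    fun x z => Submodule.mem_span_range_iff_exists_fun F
  -- Property (1)
  have prop1 : ∀ x : Matrix (Fin r) (Fin u) L,
      LinearIndependent L (fun i => w' i + Matrix.mulVec (x.map (algebraMap L K)) w i) := by
    intro x
    rw [Fintype.linearIndependent_iff]
    intro g hg
    have expand : ∀ i, g i • (w' i + Matrix.mulVec (x.map (algebraMap L K)) w i)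
        = algebraMap L K (g i) * w' i + ∑ j, algebraMap L K (g i * x i j) * w j := by
      intro i
      simp [Matrix.mulVec, dotProduct, Matrix.map_apply, Algebra.smul_def,
        mul_add, Finset.mul_sum, map_mul, mul_assoc]
    rw [Finset.sum_congr rfl (fun i _ => expand i)] at hg
    have hEe : Ee w' w g (fun j => ∑ i, g i * x i j) = Ee w' w (0 : Fin r → L) (0 : Fin u → L) := by
      have e1 : Ee w' w (0 : Fin r → L) (0 : Fin u → L) = 0 := by simp [Ee]
      rw [e1, Ee, ← hg, Finset.sum_add_distrib]
      congr 1
      rw [Finset.sum_comm]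
      congr 1
      funext j
      rw [map_sum, Finset.sum_mul]
    have := (Ee_inj hw hEe).1
    intro i
    exact congr_fun this i
  -- Injectivity of spanOut
  have prop2out : Function.Injective (spanOut F L K s r u N xs w' w) := by
    intro x x' h
    have hsub : ∀ k, ∃ c : Fin s → F,
        ∑ l, c l • outVec L K s r u N xs w' w x l = outVec L K s r u N xs w' w x' k := by
      intro k
      apply (hOmem x _).mp
      rw [h]
      exact Submodule.subset_span (Set.mem_range_self k)
    choose cc hcc using hsub
    have hNy : ∀ k j, ∑ i, N k i * (x i j - x' i j) = 0 := by
      intro k j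
      have heq : ∑ l, cc k l • outVec L K s r u N xs w' w x l
          = ∑ l, (Pi.single k (1 : F) : Fin s → F) l • outVec L K s r u N xs w' w x' l := by
        rw [single_sum (F := F), hcc]
      obtain ⟨h1, h2⟩ := keyOO hw hgen hd1 hr0 heq
      have := h2 j
      rw [h1, alN_single (F := F)] at this
      exact this
    have hY : (Matrix.of fun i j => x i j - x' i j : Matrix (Fin r) (Fin u) L) = 0 := by
      apply y_eq_zero_of (xs := xs) hgen hdr
        (single_comp_indep (F := F) (Fin.castLE hrs.le) (Fin.castLE_injective _))
      intro t j
      rw [alN_single (F := F)]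
      exact hNy _ j
    ext i j
    have := congr_fun (congr_fun hY i) j
    exact sub_eq_zero.mp this
  -- Injectivity of spanIn
  have prop2in : Function.Injective (spanIn F L K s r u N w' w) := by
    intro x x' h
    have hsub : ∀ k, ∃ c : Fin s → F,
        ∑ l, c l • inVec L K s r u N w' w x l = inVec L K s r u N w' w x' k := by
      intro k
      apply (hImem x _).mp
      rw [h]
      exact Submodule.subset_span (Set.mem_range_self k)
    choose cc hcc using hsub
    have hNy : ∀ k j, ∑ i, N k i * (x i j - x' i j) = 0 := by
      intro k j
      have heq : ∑ l, cc k l • inVec L K s r u N w' w x l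
          = ∑ l, (Pi.single k (1 : F) : Fin s → F) l • inVec L K s r u N w' w x' l := by
        rw [single_sum (F := F), hcc]
      obtain ⟨h1, h2⟩ := keyII (xs := xs) hw hgen hd1 hr0 heq
      have := h2 j
      rw [h1, alN_single (F := F)] at this
      exact this
    have hY : (Matrix.of fun i j => x i j - x' i j : Matrix (Fin r) (Fin u) L) = 0 := by
      apply y_eq_zero_of (xs := xs) hgen hdr
        (single_comp_indep (F := F) (Fin.castLE hrs.le) (Fin.castLE_injective _))
      intro t j
      rw [alN_single (F := F)]
      exact hNy _ j
    ext i j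
    have := congr_fun (congr_fun hY i) j
    exact sub_eq_zero.mp this
  -- dimensions
  have prop2dim : ∀ x : Matrix (Fin r) (Fin u) L,
      Module.finrank F (spanOut F L K s r u N xs w' w x) = s ∧
      Module.finrank F (spanIn F L K s r u N w' w x) = s := by
    intro x
    constructor
    · have := finrank_span_eq_card (R := F) (out_indep hw hgen hd1 hr0 x)
      rw [Fintype.card_fin] at this
      exact this
    · have := finrank_span_eq_card (R := F) (in_indep (xs := xs) hw hgen hd1 hr0 x)
      rw [Fintype.card_fin] at this
      exact this
  -- (3) for out
  have prop3out : ∀ P ∈ Set.range (spanOut F L K s r u N xs w' w),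
      ∀ P' ∈ Set.range (spanOut F L K s r u N xs w' w), P ≠ P' →
        Module.finrank F (P ⊓ P' : Submodule F K) < r := by
    rintro P ⟨x, rfl⟩ P' ⟨x', rfl⟩ hne
    set Q := spanOut F L K s r u N xs w' w x ⊓ spanOut F L K s r u N xs w' w x' with hQ
    by_contra hlt
    push_neg at hlt
    obtain ⟨f, hf⟩ := exists_linearIndependent_of_le_finrank hlt
    have hzind : LinearIndependent F (fun t => ((f t : K))) := by
      have := hf.map' Q.subtype (Submodule.ker_subtype Q)
      simpa [Function.comp_def] using this
    obtain ⟨c, hcz, hcind⟩ := coeffs_of_mem (F := F) _ (fun t => ((f t : K))) hzind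
      (fun t => (Submodule.mem_inf.mp (f t).2).1)
    obtain ⟨c', hcz', _⟩ := coeffs_of_mem (F := F) _ (fun t => ((f t : K))) hzind
      (fun t => (Submodule.mem_inf.mp (f t).2).2)
    have hcond : ∀ t j, ∑ i, alN N (c t) i * (x i j - x' i j) = 0 := by
      intro t j
      have heq : ∑ k, c t k • outVec L K s r u N xs w' w x k
          = ∑ k, c' t k • outVec L K s r u N xs w' w x' k := by
        rw [hcz t, hcz' t]
      exact (keyOO hw hgen hd1 hr0 heq).2 j
    have hY : (Matrix.of fun i j => x i j - x' i j : Matrix (Fin r) (Fin u) L) = 0 :=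
      y_eq_zero_of (xs := xs) hgen hdr hcind (fun t j => hcond t j)
    apply hne
    congr 1
    ext i j
    have := congr_fun (congr_fun hY i) j
    exact sub_eq_zero.mp this
  -- (3) for in
  have prop3in : ∀ P ∈ Set.range (spanIn F L K s r u N w' w),
      ∀ P' ∈ Set.range (spanIn F L K s r u N w' w), P ≠ P' →
        Module.finrank F (P ⊓ P' : Submodule F K) < r := by
    rintro P ⟨x, rfl⟩ P' ⟨x', rfl⟩ hne
    set Q := spanIn F L K s r u N w' w x ⊓ spanIn F L K s r u N w' w x' with hQ
    by_contra hlt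
    push_neg at hlt
    obtain ⟨f, hf⟩ := exists_linearIndependent_of_le_finrank hlt
    have hzind : LinearIndependent F (fun t => ((f t : K))) := by
      have := hf.map' Q.subtype (Submodule.ker_subtype Q)
      simpa [Function.comp_def] using this
    obtain ⟨c, hcz, hcind⟩ := coeffs_of_mem (F := F) _ (fun t => ((f t : K))) hzind
      (fun t => (Submodule.mem_inf.mp (f t).2).1)
    obtain ⟨c', hcz', _⟩ := coeffs_of_mem (F := F) _ (fun t => ((f t : K))) hzind
      (fun t => (Submodule.mem_inf.mp (f t).2).2)
    have hcond : ∀ t j, ∑ i, alN N (c t) i * (x i j - x' i j) = 0 := by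
      intro t j
      have heq : ∑ k, c t k • inVec L K s r u N w' w x k
          = ∑ k, c' t k • inVec L K s r u N w' w x' k := by
        rw [hcz t, hcz' t]
      exact (keyII (xs := xs) hw hgen hd1 hr0 heq).2 j
    have hY : (Matrix.of fun i j => x i j - x' i j : Matrix (Fin r) (Fin u) L) = 0 :=
      y_eq_zero_of (xs := xs) hgen hdr hcind (fun t j => hcond t j)
    apply hne
    congr 1
    ext i j
    have := congr_fun (congr_fun hY i) j
    exact sub_eq_zero.mp this
  -- (4)
  have prop4 : ∀ P ∈ Set.range (spanOut F L K s r u N xs w' w),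
      ∀ P' ∈ Set.range (spanIn F L K s r u N w' w),
        Module.finrank F (P ⊓ P' : Submodule F K) ≤ r := by
    rintro P ⟨x, rfl⟩ P' ⟨x', rfl⟩
    set Q := spanOut F L K s r u N xs w' w x ⊓ spanIn F L K s r u N w' w x' with hQ
    by_contra hlt
    push_neg at hlt
    obtain ⟨f, hf⟩ := exists_linearIndependent_of_le_finrank hlt
    have hzind : LinearIndependent F (fun t => ((f t : K))) := by
      have := hf.map' Q.subtype (Submodule.ker_subtype Q)
      simpa [Function.comp_def] using this
    obtain ⟨c, hcz, hcind⟩ := coeffs_of_mem (F := F) _ (fun t => ((f t : K))) hzind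
      (fun t => (Submodule.mem_inf.mp (f t).2).1)
    obtain ⟨c', hcz', _⟩ := coeffs_of_mem (F := F) _ (fun t => ((f t : K))) hzind
      (fun t => (Submodule.mem_inf.mp (f t).2).2)
    have hcond : ∀ t j, gaX xs (c t) j = ∑ i, alN N (c t) i * (x' i j - x i j) := by
      intro t j
      have heq : ∑ k, c t k • outVec L K s r u N xs w' w x k
          = ∑ k, c' t k • inVec L K s r u N w' w x' k := by
        rw [hcz t, hcz' t]
      exact (keyOI hw hgen hd1 hr0 heq).2 j
    -- the augmented matrix has dependent columns, hence zero determinant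
    set M' : Matrix (Fin (r + 1)) (Fin (r + 1)) L :=
      Matrix.of fun t => Fin.cons (gaX xs (c t) j0) (alN N (c t)) with hM'
    have hdet : M'.det ≠ 0 := det_aug_ne hgen hdr1 j0 hcind
    set T := M'.transpose with hT
    set coeffv : Fin (r + 1) → L := Fin.cons 0 (fun i => x' i j0 - x i j0) with hcoeffv
    have hrow : T 0 = ∑ k, coeffv k • T k := by
      funext t
      rw [Finset.sum_apply]
      rw [Fin.sum_univ_succ]
      simp only [hcoeffv, Fin.cons_zero, Fin.cons_succ, Pi.smul_apply, smul_eq_mul,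
        zero_mul, zero_add]
      have hT0 : T 0 t = gaX xs (c t) j0 := by
        simp [hT, hM', Matrix.transpose_apply, Fin.cons_zero]
      have hTs : ∀ i : Fin r, T i.succ t = alN N (c t) i := by
        intro i
        simp [hT, hM', Matrix.transpose_apply, Fin.cons_succ]
      rw [hT0, hcond t j0]
      refine Finset.sum_congr rfl (fun i _ => ?_)
      rw [hTs i]
      ring
    have hdet0 : T.det = 0 := by
      calc T.det = (T.updateRow 0 (∑ k, coeffv k • T k)).det := by
            rw [← hrow, Matrix.updateRow_eq_self]
        _ = coeffv 0 • T.det := Matrix.det_updateRow_sum T 0 coeffv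
        _ = 0 := by simp [hcoeffv, Fin.cons_zero]
    apply hdet
    rw [← Matrix.det_transpose M', ← hT]
    exact hdet0
  -- transfer lemmas for (5)
  have transferOI : ∀ R : Submodule F K, Module.finrank F R = r →
      (∃ x, R ≤ spanOut F L K s r u N xs w' w x) →
      ∃ x', R ≤ spanIn F L K s r u N w' w x' := by
    rintro R hR ⟨x, hx⟩
    let b : Module.Basis (Fin r) F ↥R := Module.finBasisOfFinrankEq F ↥R hR
    have hzind : LinearIndependent F (fun t => ((b t : K))) := by
      have := b.linearIndependent.map' R.subtype (Submodule.ker_subtype R)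
      simpa [Function.comp_def] using this
    obtain ⟨c, hcz, hcind⟩ := coeffs_of_mem (F := F) _ (fun t => ((b t : K))) hzind
      (fun t => hx (b t).2)
    set M : Matrix (Fin r) (Fin r) L := Matrix.of fun t i => alN N (c t) i with hM
    have hdet : IsUnit M.det := isUnit_iff_ne_zero.mpr (det_alN_ne hgen hdr hcind)
    set G : Matrix (Fin r) (Fin u) L := Matrix.of fun t j => gaX xs (c t) j with hG
    refine ⟨x + M⁻¹ * G, ?_⟩
    have hkey : ∀ t j, ∑ i, alN N (c t) i * ((x + M⁻¹ * G) i j - x i j) = gaX xs (c t) j := by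
      intro t j
      have h1 : ∀ i, (x + M⁻¹ * G) i j - x i j = (M⁻¹ * G) i j := by
        intro i; simp [Matrix.add_apply]
      calc ∑ i, alN N (c t) i * ((x + M⁻¹ * G) i j - x i j)
          = ∑ i, M t i * (M⁻¹ * G) i j := by
            refine Finset.sum_congr rfl fun i _ => ?_
            rw [h1 i]; rfl
        _ = (M * (M⁻¹ * G)) t j := (Matrix.mul_apply).symm
        _ = G t j := by rw [← Matrix.mul_assoc, Matrix.mul_nonsing_inv M hdet, Matrix.one_mul]
        _ = gaX xs (c t) j := rfl
    have hmem : ∀ t, ((b t : K)) ∈ spanIn F L K s r u N w' w (x + M⁻¹ * G) := by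
      intro t
      apply (hImem _ _).mpr
      refine ⟨c t, ?_⟩
      rw [expand_in (F := F), ← hcz t, expand_out]
      congr 1
      funext j
      show biX N (x + M⁻¹ * G) (c t) j = boX N xs x (c t) j
      simp only [biX, boX]
      have h2 := hkey t j
      simp only [mul_sub, Finset.sum_sub_distrib] at h2
      linear_combination h2
    have hR2 : R = Submodule.span F (Set.range (fun t => ((b t : K)))) := by
      conv_lhs => rw [← Submodule.map_subtype_top R, ← b.span_eq]
      rw [Submodule.map_span]
      congr 1
      rw [← Set.range_comp]
      rfl
    rw [hR2, Submodule.span_le]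
    rintro _ ⟨t, rfl⟩
    exact hmem t
  have transferIO : ∀ R : Submodule F K, Module.finrank F R = r →
      (∃ x', R ≤ spanIn F L K s r u N w' w x') →
      ∃ x, R ≤ spanOut F L K s r u N xs w' w x := by
    rintro R hR ⟨x', hx'⟩
    let b : Module.Basis (Fin r) F ↥R := Module.finBasisOfFinrankEq F ↥R hR
    have hzind : LinearIndependent F (fun t => ((b t : K))) := by
      have := b.linearIndependent.map' R.subtype (Submodule.ker_subtype R)
      simpa [Function.comp_def] using this
    obtain ⟨c, hcz, hcind⟩ := coeffs_of_mem (F := F) _ (fun t => ((b t : K))) hzind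
      (fun t => hx' (b t).2)
    set M : Matrix (Fin r) (Fin r) L := Matrix.of fun t i => alN N (c t) i with hM
    have hdet : IsUnit M.det := isUnit_iff_ne_zero.mpr (det_alN_ne hgen hdr hcind)
    set G : Matrix (Fin r) (Fin u) L := Matrix.of fun t j => gaX xs (c t) j with hG
    refine ⟨x' - M⁻¹ * G, ?_⟩
    have hkey : ∀ t j, ∑ i, alN N (c t) i * (x' i j - (x' - M⁻¹ * G) i j) = gaX xs (c t) j := by
      intro t j
      have h1 : ∀ i, x' i j - (x' - M⁻¹ * G) i j = (M⁻¹ * G) i j := by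
        intro i; simp [Matrix.sub_apply]
      calc ∑ i, alN N (c t) i * (x' i j - (x' - M⁻¹ * G) i j)
          = ∑ i, M t i * (M⁻¹ * G) i j := by
            refine Finset.sum_congr rfl fun i _ => ?_
            rw [h1 i]; rfl
        _ = (M * (M⁻¹ * G)) t j := (Matrix.mul_apply).symm
        _ = G t j := by rw [← Matrix.mul_assoc, Matrix.mul_nonsing_inv M hdet, Matrix.one_mul]
        _ = gaX xs (c t) j := rfl
    have hmem : ∀ t, ((b t : K)) ∈ spanOut F L K s r u N xs w' w (x' - M⁻¹ * G) := by
      intro t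
      apply (hOmem _ _).mpr
      refine ⟨c t, ?_⟩
      rw [expand_out, ← hcz t, expand_in (F := F)]
      congr 1
      funext j
      show boX N xs (x' - M⁻¹ * G) (c t) j = biX N x' (c t) j
      simp only [biX, boX]
      have h2 := hkey t j
      simp only [mul_sub, Finset.sum_sub_distrib] at h2
      linear_combination -h2
    have hR2 : R = Submodule.span F (Set.range (fun t => ((b t : K)))) := by
      conv_lhs => rw [← Submodule.map_subtype_top R, ← b.span_eq]
      rw [Submodule.map_span]
      congr 1
      rw [← Set.range_comp]
      rfl
    rw [hR2, Submodule.span_le]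
    rintro _ ⟨t, rfl⟩
    exact hmem t
  -- (5)
  have prop5 : ∀ R : Submodule F K, Module.finrank F R = r →
      {P | P ∈ Set.range (spanOut F L K s r u N xs w' w) ∧ R ≤ P}.ncard =
        {P | P ∈ Set.range (spanIn F L K s r u N w' w) ∧ R ≤ P}.ncard := by
    intro R hR
    have hOsub : {P | P ∈ Set.range (spanOut F L K s r u N xs w' w) ∧ R ≤ P}.Subsingleton := by
      rintro P ⟨hP1, hP2⟩ P' ⟨hP'1, hP'2⟩
      by_contra hne
      have h3 := prop3out P hP1 P' hP'1 hne
      have h5 : r ≤ Module.finrank F ↥(P ⊓ P') := by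
        rw [← hR]
        exact Submodule.finrank_mono (le_inf hP2 hP'2)
      omega
    have hIsub : {P | P ∈ Set.range (spanIn F L K s r u N w' w) ∧ R ≤ P}.Subsingleton := by
      rintro P ⟨hP1, hP2⟩ P' ⟨hP'1, hP'2⟩
      by_contra hne
      have h3 := prop3in P hP1 P' hP'1 hne
      have h5 : r ≤ Module.finrank F ↥(P ⊓ P') := by
        rw [← hR]
        exact Submodule.finrank_mono (le_inf hP2 hP'2)
      omega
    by_cases hO : ∃ x, R ≤ spanOut F L K s r u N xs w' w x
    · obtain ⟨x, hx⟩ := hO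
      obtain ⟨x', hx'⟩ := transferOI R hR ⟨x, hx⟩
      have e1 : {P | P ∈ Set.range (spanOut F L K s r u N xs w' w) ∧ R ≤ P}
          = {spanOut F L K s r u N xs w' w x} :=
        hOsub.eq_singleton_of_mem ⟨⟨x, rfl⟩, hx⟩
      have e2 : {P | P ∈ Set.range (spanIn F L K s r u N w' w) ∧ R ≤ P}
          = {spanIn F L K s r u N w' w x'} :=
        hIsub.eq_singleton_of_mem ⟨⟨x', rfl⟩, hx'⟩
      rw [e1, e2, Set.ncard_singleton, Set.ncard_singleton]
    · have e1 : {P | P ∈ Set.range (spanOut F L K s r u N xs w' w) ∧ R ≤ P} = ∅ := by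
        rw [Set.eq_empty_iff_forall_notMem]
        rintro P ⟨⟨x, rfl⟩, hP2⟩
        exact hO ⟨x, hP2⟩
      have e2 : {P | P ∈ Set.range (spanIn F L K s r u N w' w) ∧ R ≤ P} = ∅ := by
        rw [Set.eq_empty_iff_forall_notMem]
        rintro P ⟨⟨x', rfl⟩, hP2⟩
        exact hO (transferIO R hR ⟨x', hP2⟩)
      rw [e1, e2]
  exact ⟨prop1, prop2out, prop2in, prop2dim, prop3out, prop3in, prop4, prop5⟩
end
end
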